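/- arXiv:1607.06310 — 7 statements merged into one kernel-verified Lean document; each statement's English description precedes it below -/
import Mathlib

section
/- Let α ∈ (0,1) and 0 < C ≤ 1/4. Suppose ψ : S¹ → S¹ satisfies |ψ(ζ) − ζ| ≤ C·|ζ − 1|^{α+1} for every ζ ∈ S¹. Let ε > 0 and let t ∈ [0,1) satisfy 1 − t ≤ (1/4)·(ε/(4C))^{1/α}. Then for every ζ ∈ S¹ one has |h_t^{-1}(ψ(h_t(ζ))) − ζ| ≤ ε. -/
/-- The Möbius transformation `h_t(z) = (z + t)/(1 + t z)` of the unit disk,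
for a real parameter `t`.  Its inverse is `h_{-t}`. -/
noncomputable def mobH (t : ℝ) (z : ℂ) : ℂ := (z + (t : ℂ)) / (1 + (t : ℂ) * z)

lemma mobH_aux1 (t : ℝ) (ht0 : 0 ≤ t) (z : ℂ) (hz : ‖z‖ = 1) :
    1 - t ≤ ‖1 - (t:ℂ)*z‖ := by
  have h : ‖(1:ℂ)‖ - ‖(t:ℂ)*z‖ ≤ ‖1 - (t:ℂ)*z‖ :=
    norm_sub_norm_le _ _
  simpa [norm_mul, hz, Complex.norm_real, abs_of_nonneg ht0] using h

lemma mobH_aux2 (t : ℝ) (ht1 : t ≤ 1) (z : ℂ) (hz : ‖z‖ = 1) :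
    ‖1 - z‖ - (1 - t) ≤ ‖1 - (t:ℂ)*z‖ := by
  have e : (1 : ℂ) - (t:ℂ)*z = (1 - z) + ((1:ℂ) - t)*z := by ring
  rw [e]
  have h : ‖1 - z‖ - ‖((1:ℂ) - t)*z‖ ≤ ‖(1 - z) + ((1:ℂ) - t)*z‖ := by
    have := norm_sub_norm_le (1 - z) (-(((1:ℂ) - t)*z)); rwa [norm_neg, sub_neg_eq_add] at this
  have h2 : ‖((1:ℂ) - (t:ℂ))*z‖ = 1 - t := by
    rw [norm_mul, hz, mul_one]
    have : ((1:ℂ) - (t:ℂ)) = ((1 - t : ℝ) : ℂ) := by push_cast; ring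
    rw [this, Complex.norm_real, Real.norm_eq_abs, abs_of_nonneg (by linarith)]
  linarith [h, h2.le]

lemma mobH_aux3 (t : ℝ) (z : ℂ) (hz : ‖z‖ = 1) :
    ‖z + (t:ℂ)‖ = ‖1 + (t:ℂ)*z‖ := by
  have h1 : (1 : ℂ) + (t:ℂ)*z = z * (starRingEnd ℂ) (z + (t:ℂ)) := by
    rw [map_add, mul_add]
    have : z * (starRingEnd ℂ) z = ((‖z‖ : ℝ) : ℂ)^2 := by
      rw [Complex.mul_conj]; norm_cast; rw [Complex.sq_norm, Complex.normSq_eq_norm_sq]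
    rw [this, hz]
    push_cast
    simp [Complex.conj_ofReal]
    ring
  rw [h1, norm_mul, hz, one_mul, Complex.norm_conj]

lemma mobH_neg (t : ℝ) (z : ℂ) : mobH (-t) z = (z - (t:ℂ)) / (1 - (t:ℂ)*z) := by
  unfold mobH; push_cast; rw [← sub_eq_add_neg, neg_mul, ← sub_eq_add_neg]

lemma mobH_diff (t : ℝ) (a b : ℂ) (ha : 1 - (t:ℂ)*a ≠ 0) (hb : 1 - (t:ℂ)*b ≠ 0) :
    mobH (-t) a - mobH (-t) b
      = (a - b) * (1 - (t:ℂ)^2) / ((1 - (t:ℂ)*a) * (1 - (t:ℂ)*b)) := by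
  rw [mobH_neg, mobH_neg]
  rw [div_sub_div _ _ ha hb]; congr 1
  ring

lemma mobH_inv (t : ℝ) (ζ : ℂ) (h1 : 1 + (t:ℂ)*ζ ≠ 0) (h2 : 1 - (t:ℂ)*(mobH t ζ) ≠ 0) :
    mobH (-t) (mobH t ζ) = ζ := by
  rw [mobH_neg]
  rw [div_eq_iff h2]
  unfold mobH at *
  field_simp at h2 ⊢
  ring

set_option maxHeartbeats 1000000 in
/-- If `ψ : S¹ → S¹` satisfies `|ψ(ζ) − ζ| ≤ C·|ζ − 1|^(α+1)` with
`0 < C ≤ 1/4`, and `t ∈ [0,1)` with `1 − t ≤ (1/4)·(ε/(4C))^(1/α)`, then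
`|h_t⁻¹(ψ(h_t(ζ))) − ζ| ≤ ε` for every `ζ ∈ S¹`. -/
theorem stmt_1 (α C : ℝ) (hα : 0 < α) (hα1 : α < 1) (hC : 0 < C) (hC4 : C ≤ 1 / 4)
    (ψ : ℂ → ℂ) (hmaps : ∀ ζ : ℂ, ‖ζ‖ = 1 → ‖ψ ζ‖ = 1)
    (hψ : ∀ ζ : ℂ, ‖ζ‖ = 1 →
      ‖ψ ζ - ζ‖ ≤ C * (‖ζ - 1‖) ^ (α + 1))
    (ε : ℝ) (hε : 0 < ε) (t : ℝ) (ht0 : 0 ≤ t) (ht1 : t < 1)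
    (htε : 1 - t ≤ (1 / 4) * (ε / (4 * C)) ^ (1 / α)) :
    ∀ ζ : ℂ, ‖ζ‖ = 1 →
      ‖mobH (-t) (ψ (mobH t ζ)) - ζ‖ ≤ ε := by
  intro ζ hζ
  have h1t : (0:ℝ) < 1 - t := by linarith
  -- denominator of h_t nonzero
  have hd1 : (1:ℂ) + (t:ℂ)*ζ ≠ 0 := by
    have h := mobH_aux1 t ht0 (-ζ) (by simpa using hζ)
    have e : (1:ℂ) - (t:ℂ)*(-ζ) = 1 + (t:ℂ)*ζ := by ring
    rw [e] at h
    intro h0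
    rw [h0] at h
    simp at h
    linarith
  set w := mobH t ζ with hwdef
  -- |w| = 1
  have hw : ‖w‖ = 1 := by
    rw [hwdef]
    unfold mobH
    rw [norm_div, mobH_aux3 t ζ hζ, div_self]
    simpa using hd1.symm ∘ Eq.symm ∘ norm_eq_zero.mp
  have hψw : ‖ψ w‖ = 1 := hmaps w hw
  -- denominators 1 - t·w and 1 - t·ψ(w)
  have hQ1 : 1 - t ≤ ‖1 - (t:ℂ)*w‖ := mobH_aux1 t ht0 w hw
  have hP1 : 1 - t ≤ ‖1 - (t:ℂ)*(ψ w)‖ := mobH_aux1 t ht0 (ψ w) hψw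
  set P := ‖1 - (t:ℂ)*(ψ w)‖ with hPdef
  set Q := ‖1 - (t:ℂ)*w‖ with hQdef
  have hP0 : 0 < P := lt_of_lt_of_le h1t hP1
  have hQ0 : 0 < Q := lt_of_lt_of_le h1t hQ1
  have hQne : (1:ℂ) - (t:ℂ)*w ≠ 0 := fun h => by rw [hQdef, h] at hQ0; simp at hQ0
  have hPne : (1:ℂ) - (t:ℂ)*(ψ w) ≠ 0 := fun h => by rw [hPdef, h] at hP0; simp at hP0
  -- the key formula
  have hinv : mobH (-t) w = ζ := mobH_inv t ζ hd1 hQne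
  have hform : mobH (-t) (ψ w) - ζ
      = (ψ w - w) * (1 - (t:ℂ)^2) / ((1 - (t:ℂ)*(ψ w)) * (1 - (t:ℂ)*w)) := by
    rw [← hinv, mobH_diff t (ψ w) w hPne hQne]
  set E := ‖ψ w - w‖ with hEdef
  set s := ‖w - 1‖ with hsdef
  have habs : ‖mobH (-t) (ψ w) - ζ‖ = E * (1 - t^2) / (P * Q) := by
    rw [hform, norm_div, norm_mul, norm_mul]
    congr 1
    have e : (1:ℂ) - (t:ℂ)^2 = ((1 - t^2 : ℝ) : ℂ) := by push_cast; ring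
    rw [e, Complex.norm_real, Real.norm_eq_abs, abs_of_nonneg (by nlinarith)]
  rw [habs, div_le_iff₀ (by positivity)]
  -- real estimates
  have hE : E ≤ C * s ^ (α + 1) := hψ w hw
  have hEpos : 0 ≤ E := norm_nonneg _
  have hspos : 0 ≤ s := norm_nonneg _
  have hs1w : ‖1 - w‖ = s := by rw [hsdef, norm_sub_rev]
  have hs2 : s ≤ 2 := by
    have h := norm_add_le w (-1)
    simp only [← sub_eq_add_neg] at h
    rw [← hsdef] at h
    simp only [norm_neg, norm_one, hw] at h
    linarith
  set δ := (ε / (4 * C)) ^ (1 / α) with hδdef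
  have hδpos : 0 < δ := Real.rpow_pos_of_pos (by positivity) _
  have hδα : δ ^ α = ε / (4 * C) := by
    rw [hδdef, ← Real.rpow_mul (by positivity), one_div_mul_cancel hα.ne', Real.rpow_one]
  have hεδ : ε = 4 * C * δ ^ α := by rw [hδα]; field_simp
  by_cases hs0 : s = 0
  · have : E = 0 := by
      have : E ≤ 0 := by
        rw [hs0] at hE
        rwa [Real.zero_rpow (by linarith), mul_zero] at hE
      linarith
    rw [this, zero_mul]
    positivity
  have hs : 0 < s := lt_of_le_of_ne hspos (Ne.symm hs0)
  have hspow : s ^ (α + 1) = s ^ α * s := by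
    rw [Real.rpow_add hs, Real.rpow_one]
  have hsα2 : s ^ α ≤ 2 := by
    rcases le_total s 1 with h | h
    · have := Real.rpow_le_one hspos h hα.le
      linarith
    · calc s ^ α ≤ s ^ (1:ℝ) := Real.rpow_le_rpow_of_exponent_le h hα1.le
        _ = s := Real.rpow_one s
        _ ≤ 2 := hs2
  have h1t2 : (0:ℝ) ≤ 1 - t^2 := by nlinarith
  have hsα0 : (0:ℝ) ≤ s ^ α := Real.rpow_nonneg hspos α
  have hE' : E ≤ C * s ^ α * s := by rw [mul_assoc, ← hspow]; exact hE
  have hEhalf : E ≤ s / 2 := by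
    have hCs2 : C * s ^ α ≤ 1/2 := by
      calc C * s ^ α ≤ (1/4) * s ^ α := mul_le_mul_of_nonneg_right hC4 hsα0
        _ ≤ 1/2 := by linarith
    have := mul_le_mul_of_nonneg_right hCs2 hspos
    linarith
  have hQs : s / 2 ≤ Q := by
    have h := mobH_aux2 t ht1.le w hw
    rw [hs1w, ← hQdef] at h
    rcases le_total (s/2) (1-t) with h' | h'
    · linarith
    · linarith
  have hPs : s / 4 ≤ P := by
    have h := mobH_aux2 t ht1.le (ψ w) hψw
    rw [← hPdef] at h
    have h2 : s - E ≤ ‖1 - ψ w‖ := by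
      have h3 := norm_sub_norm_le (1 - w) (ψ w - w)
      have e : (1 - w) - (ψ w - w) = 1 - ψ w := by ring
      rw [e, hs1w, ← hEdef] at h3
      exact h3
    rcases le_total (s/4) (1-t) with h' | h'
    · linarith
    · linarith
  have htδ : 1 - t ≤ δ / 4 := by rw [hδdef]; linarith [htε]
  have key2 : 1 - t^2 ≤ 2 * (1 - t) := by nlinarith
  rcases le_total s δ with hsδ | hsδ
  · -- small s
    have hsαδ : s ^ α ≤ δ ^ α := Real.rpow_le_rpow hspos hsδ hα.le
    have hCs : C * s ^ α ≤ ε / 4 := by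
      have h1 := mul_le_mul_of_nonneg_left hsαδ hC.le
      rw [hδα] at h1
      have e : C * (ε / (4 * C)) = ε / 4 := by field_simp
      linarith
    calc E * (1 - t^2) ≤ (C * s ^ α * s) * (1 - t^2) :=
          mul_le_mul_of_nonneg_right hE' h1t2
      _ ≤ ((ε/4) * s) * (2 * (1 - t)) :=
          mul_le_mul (mul_le_mul_of_nonneg_right hCs hspos) key2 h1t2 (by positivity)
      _ = ε * ((1 - t) * (s/2)) := by ring
      _ ≤ ε * (P * Q) := by
          apply mul_le_mul_of_nonneg_left _ hε.le
          exact mul_le_mul hP1 hQs (by positivity) hP0.le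
  · -- large s
    have hkey : s ^ α * δ ≤ s * δ ^ α := by
      have h1le : 1 ≤ s / δ := (one_le_div hδpos).2 hsδ
      have h1 : (s/δ) ^ α ≤ s/δ := by
        calc (s/δ) ^ α ≤ (s/δ) ^ (1:ℝ) := Real.rpow_le_rpow_of_exponent_le h1le hα1.le
          _ = s/δ := Real.rpow_one _
      rw [Real.div_rpow hspos hδpos.le] at h1
      rw [div_le_div_iff₀ (Real.rpow_pos_of_pos hδpos α) hδpos] at h1
      linarith
    calc E * (1 - t^2) ≤ (C * s ^ α * s) * (1 - t^2) :=
          mul_le_mul_of_nonneg_right hE' h1t2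
      _ ≤ (C * s ^ α * s) * (2 * (δ/4)) := by
          apply mul_le_mul_of_nonneg_left (by linarith) (by positivity)
      _ = (C * (s ^ α * δ)) * (s / 2) := by ring
      _ ≤ (C * (s * δ ^ α)) * (s / 2) := by
          apply mul_le_mul_of_nonneg_right _ (by positivity)
          exact mul_le_mul_of_nonneg_left hkey hC.le
      _ = (4 * C * δ ^ α) * ((s/4) * (s/2)) := by ring
      _ = ε * ((s/4) * (s/2)) := by rw [← hεδ]
      _ ≤ ε * (P * Q) :=
          mul_le_mul_of_nonneg_left (mul_le_mul hPs hQs (by positivity) hP0.le) hε.le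
end

section
/- Let ε > 0 and let φ : S¹ → S¹ be continuous with d_{S¹}(φ(ζ), ζ) < ε for every ζ ∈ S¹. Then for every w in the open unit disk 𝔻, one has |ξ_φ(w) − ξ_id(w)| < 2ε; equivalently, since ξ_id(w) = −w, |ξ_φ(w) + w| < 2ε. -/
/-- Arc-length distance on the unit circle: the infimum of `|x₁ − x₂|` over
representatives `ζ₁ = e^{ix₁}`, `ζ₂ = e^{ix₂}`. -/
noncomputable def dS1 (ζ₁ ζ₂ : ℂ) : ℝ :=
  sInf {d : ℝ | ∃ x₁ x₂ : ℝ, ζ₁ = Complex.exp (Complex.I * (x₁ : ℂ)) ∧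
    ζ₂ = Complex.exp (Complex.I * (x₂ : ℂ)) ∧ d = |x₁ - x₂|}

/-- The average `ξ_φ(w) = (1/2π)·∫₀^{2π} (φ(e^{ix}) − w)/(1 − w̄·φ(e^{ix})) dx`
of a circle map `φ` taken at `w` in the unit disk. -/
noncomputable def avgMap (φ : ℂ → ℂ) (w : ℂ) : ℂ :=
  (1 / (2 * Real.pi)) • ∫ x in (0 : ℝ)..(2 * Real.pi),
    (φ (Complex.exp (Complex.I * (x : ℂ))) - w) /
      (1 - (starRingEnd ℂ) w * φ (Complex.exp (Complex.I * (x : ℂ))))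

open MeasureTheory intervalIntegral Real Complex Set Metric

/-- Mean value: circle average of a holomorphic function on the closed unit disk. -/
lemma meanValue (f : ℂ → ℂ) (hf : DifferentiableOn ℂ f (closedBall 0 1)) :
    (∫ x in (0:ℝ)..(2*Real.pi), f (Complex.exp (Complex.I * x))) = (2*Real.pi : ℝ) * f 0 := by
  have hball : closure (ball (0:ℂ) 1) = closedBall 0 1 := closure_ball (0:ℂ) one_ne_zero
  have hd : DiffContOnCl ℂ f (ball (0:ℂ) 1) :=
    ⟨hf.mono ball_subset_closedBall, hball ▸ hf.continuousOn⟩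
  have h0 : (0:ℂ) ∈ ball (0:ℂ) 1 := by simp
  have key := hd.circleIntegral_sub_inv_smul h0
  rw [circleIntegral] at key
  simp only [deriv_circleMap, circleMap_zero, sub_zero, smul_eq_mul, Complex.ofReal_one] at key
  have : (∫ x in (0:ℝ)..(2*Real.pi), (1 * Complex.exp (x * Complex.I) * Complex.I) *
      ((1 * Complex.exp (x * Complex.I))⁻¹ * f (1 * Complex.exp (x * Complex.I))))
      = ∫ x in (0:ℝ)..(2*Real.pi), Complex.I * f (Complex.exp (Complex.I * x)) := by
    refine intervalIntegral.integral_congr fun x _ => ?_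
    have hne : Complex.exp (x * Complex.I) ≠ 0 := Complex.exp_ne_zero _
    field_simp [mul_comm (x:ℂ) Complex.I]
  rw [this] at key
  rw [intervalIntegral.integral_const_mul] at key
  have hI : (Complex.I : ℂ) ≠ 0 := Complex.I_ne_zero
  have h2 : Complex.I * (∫ x in (0:ℝ)..(2*Real.pi), f (Complex.exp (Complex.I * x)))
      = Complex.I * ((2 * Real.pi : ℂ) * f 0) := by rw [key]; ring
  have := mul_left_cancel₀ hI h2
  rw [this]; push_cast; ring

variable {w : ℂ}

lemma den_ne (hw : ‖w‖ < 1) {z : ℂ} (hz : ‖z‖ ≤ 1) :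
    1 - (starRingEnd ℂ) w * z ≠ 0 := by
  intro h
  have h1 : (starRingEnd ℂ) w * z = 1 := by linear_combination -h
  have : ‖(starRingEnd ℂ) w * z‖ < 1 := by
    rw [norm_mul, Complex.norm_conj]
    calc ‖w‖ * ‖z‖ ≤ ‖w‖ * 1 :=
      mul_le_mul_of_nonneg_left hz (norm_nonneg w)
    _ < 1 := by simpa using hw
  rw [h1] at this; simp at this

lemma abs_exp_I_mul (x : ℝ) : ‖Complex.exp (Complex.I * x)‖ = 1 := by
  rw [mul_comm]; exact Complex.norm_exp_ofReal_mul_I x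

/-- ξ_id(w) = -w -/
lemma avg_id (hw : ‖w‖ < 1) :
    (∫ x in (0:ℝ)..(2*Real.pi),
      (Complex.exp (Complex.I * x) - w) / (1 - (starRingEnd ℂ) w * Complex.exp (Complex.I * x)))
      = (2*Real.pi : ℝ) * (-w) := by
  have := meanValue (fun z => (z - w) / (1 - (starRingEnd ℂ) w * z)) ?_
  · simpa using this
  · intro z hz
    refine (DifferentiableAt.differentiableWithinAt ?_)
    apply DifferentiableAt.div
    · fun_prop
    · fun_prop
    · exact den_ne hw (by simpa [Metric.mem_closedBall, Complex.dist_eq] using hz)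

/-- The Poisson-type kernel. -/
noncomputable def P (w : ℂ) (t : ℝ) : ℝ :=
  (1 - Complex.normSq w) / Complex.normSq (1 - (starRingEnd ℂ) w * Complex.exp (Complex.I * t))

lemma P_nonneg (hw : ‖w‖ < 1) (t : ℝ) : 0 ≤ P w t := by
  apply div_nonneg
  · nlinarith [Complex.sq_norm w, norm_nonneg w]
  · exact Complex.normSq_nonneg _

lemma P_continuous (hw : ‖w‖ < 1) : Continuous (P w) := by
  unfold P
  apply Continuous.div
  · fun_prop
  · exact Complex.continuous_normSq.comp (by fun_prop)
  · intro t
    have := den_ne hw (abs_exp_I_mul t).le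
    simpa [Complex.normSq_eq_zero] using this

lemma P_eq_re (hw : ‖w‖ < 1) (t : ℝ) :
    P w t = ((1 + (starRingEnd ℂ) w * Complex.exp (Complex.I * t)) /
      (1 - (starRingEnd ℂ) w * Complex.exp (Complex.I * t))).re := by
  set u := (starRingEnd ℂ) w * Complex.exp (Complex.I * t) with hu
  have habs : Complex.normSq u = Complex.normSq w := by
    rw [hu, Complex.normSq_mul]
    have : Complex.normSq (Complex.exp (Complex.I * t)) = 1 := by
      have := abs_exp_I_mul t
      rw [← Complex.sq_norm, this]; norm_num
    simp [this, Complex.normSq_conj]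
  rw [Complex.div_re]
  rw [P, ← habs, ← hu]
  have : Complex.normSq (1 - u) = (1-u).re^2 + (1-u).im^2 := by
    rw [Complex.normSq_apply]; ring
  simp only [Complex.add_re, Complex.add_im, Complex.sub_re, Complex.sub_im,
    Complex.one_re, Complex.one_im, Complex.normSq_apply]
  ring_nf

lemma P_integral (hw : ‖w‖ < 1) :
    (∫ t in (0:ℝ)..(2*Real.pi), P w t) = 2*Real.pi := by
  have hg := meanValue (fun z => (1 + (starRingEnd ℂ) w * z) / (1 - (starRingEnd ℂ) w * z)) ?_
  · have hcont : Continuous (fun t : ℝ => (1 + (starRingEnd ℂ) w * Complex.exp (Complex.I * t)) /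
        (1 - (starRingEnd ℂ) w * Complex.exp (Complex.I * t))) := by
      apply Continuous.div
      · fun_prop
      · fun_prop
      · exact fun t => den_ne hw (abs_exp_I_mul t).le
    have hint : IntervalIntegrable (fun t : ℝ => (1 + (starRingEnd ℂ) w * Complex.exp (Complex.I * t)) /
        (1 - (starRingEnd ℂ) w * Complex.exp (Complex.I * t))) volume 0 (2*Real.pi) :=
      hcont.intervalIntegrable _ _
    have := Complex.reCLM.intervalIntegral_comp_comm hint
    calc (∫ t in (0:ℝ)..(2*Real.pi), P w t)
        = ∫ t in (0:ℝ)..(2*Real.pi), Complex.reCLM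
          ((1 + (starRingEnd ℂ) w * Complex.exp (Complex.I * t)) /
            (1 - (starRingEnd ℂ) w * Complex.exp (Complex.I * t))) := by
          refine intervalIntegral.integral_congr fun t _ => ?_
          simpa using P_eq_re hw t
      _ = Complex.reCLM (∫ t in (0:ℝ)..(2*Real.pi),
          (1 + (starRingEnd ℂ) w * Complex.exp (Complex.I * t)) /
            (1 - (starRingEnd ℂ) w * Complex.exp (Complex.I * t))) := this
      _ = 2*Real.pi := by rw [hg]; simp
  · intro z hz
    refine (DifferentiableAt.differentiableWithinAt ?_)
    apply DifferentiableAt.div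
    · fun_prop
    · fun_prop
    · exact den_ne hw (by simpa [Metric.mem_closedBall, Complex.dist_eq] using hz)

lemma P_periodic : Function.Periodic (P w) (2*Real.pi) := by
  intro t
  unfold P
  congr 2
  push_cast
  rw [mul_add, Complex.exp_add]
  simp [mul_comm Complex.I (2*Real.pi:ℂ), Complex.exp_two_pi_mul_I]

noncomputable def Fc (w : ℂ) (t : ℝ) : ℂ :=
  (Complex.exp (Complex.I * t) - w) / (1 - (starRingEnd ℂ) w * Complex.exp (Complex.I * t))

noncomputable def Fc' (w : ℂ) (t : ℝ) : ℂ :=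
  Complex.I * Complex.exp (Complex.I * t) * (1 - (starRingEnd ℂ) w * w) /
    (1 - (starRingEnd ℂ) w * Complex.exp (Complex.I * t))^2

lemma Fc_hasDeriv (hw : ‖w‖ < 1) (t : ℝ) : HasDerivAt (Fc w) (Fc' w t) t := by
  have hG : ∀ z : ℂ, ‖Complex.exp (Complex.I * z)‖ ≤ 1 → HasDerivAt (fun z : ℂ => (Complex.exp (Complex.I * z) - w) /
        (1 - (starRingEnd ℂ) w * Complex.exp (Complex.I * z)))
      (Complex.I * Complex.exp (Complex.I * z) * (1 - (starRingEnd ℂ) w * w) /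
        (1 - (starRingEnd ℂ) w * Complex.exp (Complex.I * z))^2) z := by
    intro z hz
    have hE : HasDerivAt (fun z : ℂ => Complex.exp (Complex.I * z))
        (Complex.I * Complex.exp (Complex.I * z)) z := by
      have h1 : HasDerivAt (fun z : ℂ => Complex.I * z) Complex.I z := by
        simpa using (hasDerivAt_id z).const_mul Complex.I
      have h2 := (Complex.hasDerivAt_exp (Complex.I * z)).comp z h1
      simpa [Function.comp_def, mul_comm] using h2
    have hnum : HasDerivAt (fun z : ℂ => Complex.exp (Complex.I * z) - w)
        (Complex.I * Complex.exp (Complex.I * z)) z := hE.sub_const w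
    have hden : HasDerivAt (fun z : ℂ => 1 - (starRingEnd ℂ) w * Complex.exp (Complex.I * z))
        (-((starRingEnd ℂ) w * (Complex.I * Complex.exp (Complex.I * z)))) z :=
      ((hE.const_mul ((starRingEnd ℂ) w)).const_sub 1)
    have hne : 1 - (starRingEnd ℂ) w * Complex.exp (Complex.I * z) ≠ 0 := den_ne hw hz
    have := hnum.div hden hne
    refine this.congr_deriv ?_
    rw [div_eq_div_iff (pow_ne_zero 2 hne) (pow_ne_zero 2 hne)]
    ring
  have := (hG (t : ℂ) (abs_exp_I_mul t).le).comp_ofReal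
  exact this

lemma abs_Fc' (hw : ‖w‖ < 1) (t : ℝ) : ‖Fc' w t‖ = P w t := by
  unfold Fc' P
  rw [norm_div, norm_mul, norm_mul, Complex.norm_I, abs_exp_I_mul, norm_pow, Complex.sq_norm]
  have h1 : 1 - (starRingEnd ℂ) w * w = ((1 - Complex.normSq w : ℝ) : ℂ) := by
    push_cast
    rw [Complex.normSq_eq_conj_mul_self]
  rw [h1, Complex.norm_real, Real.norm_eq_abs,
    _root_.abs_of_nonneg (by nlinarith [Complex.sq_norm w, norm_nonneg w] : (0:ℝ) ≤ 1 - Complex.normSq w)]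
  ring

lemma Fc'_continuous (hw : ‖w‖ < 1) : Continuous (Fc' w) := by
  unfold Fc'
  apply Continuous.div
  · fun_prop
  · fun_prop
  · intro t
    exact pow_ne_zero 2 (den_ne hw (abs_exp_I_mul t).le)

noncomputable def Q (w : ℂ) (y : ℝ) : ℝ := ∫ t in (0:ℝ)..y, P w t

lemma Q_continuous (hw : ‖w‖ < 1) : Continuous (Q w) :=
  intervalIntegral.continuous_primitive
    (fun a b => ((P_continuous hw).intervalIntegrable a b)) 0

lemma Q_sub (hw : ‖w‖ < 1) (a b : ℝ) :
    Q w b - Q w a = ∫ t in a..b, P w t := by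
  unfold Q
  rw [← intervalIntegral.integral_add_adjacent_intervals
    ((P_continuous hw).intervalIntegrable 0 a) ((P_continuous hw).intervalIntegrable a b)]
  ring

lemma Q_period (hw : ‖w‖ < 1) (u : ℝ) :
    Q w (u + 2*Real.pi) - Q w u = 2*Real.pi := by
  rw [Q_sub hw]
  rw [P_periodic.intervalIntegral_add_eq u 0]
  simpa using P_integral hw

/-- Pointwise FTC bound. -/
lemma pointwise_bound (hw : ‖w‖ < 1) {c : ℝ} (hc : 0 ≤ c) {x θx : ℝ}
    (hθ : |θx| ≤ c) :
    ‖Fc w (x + θx) - Fc w x‖ ≤ Q w (x + c) - Q w (x - c) := by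
  have hftc : Fc w (x + θx) - Fc w x = ∫ t in x..(x + θx), Fc' w t :=
    (intervalIntegral.integral_eq_sub_of_hasDerivAt (fun t _ => Fc_hasDeriv hw t)
      ((Fc'_continuous hw).intervalIntegrable _ _)).symm
  rw [hftc]
  have heq : (∫ t in x..(x + θx), ‖Fc' w t‖) = ∫ t in x..(x + θx), P w t :=
    intervalIntegral.integral_congr fun t _ => by rw [abs_Fc' hw]
  have h1 : ‖∫ t in x..(x + θx), Fc' w t‖ ≤ |∫ t in x..(x + θx), P w t| := by
    calc ‖∫ t in x..(x + θx), Fc' w t‖ = ‖∫ t in x..(x + θx), Fc' w t‖ :=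
        rfl
      _ ≤ |∫ t in x..(x + θx), ‖Fc' w t‖| := intervalIntegral.norm_integral_le_abs_integral_norm
      _ = |∫ t in x..(x + θx), P w t| := by rw [heq]
  obtain ⟨hθ1, hθ2⟩ := abs_le.1 hθ
  have h2 : |∫ t in x..(x + θx), P w t| ≤ |∫ t in (x-c)..(x+c), P w t| := by
    apply intervalIntegral.abs_integral_mono_interval
    · rw [Set.uIoc, Set.uIoc]
      apply Set.Ioc_subset_Ioc
      · refine le_min (by linarith [min_le_left (x-c) (x+c)]) ?_
        calc min (x-c) (x+c) ≤ x - c := min_le_left _ _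
          _ ≤ x + θx := by linarith
      · refine max_le ?_ ?_
        · calc x ≤ x + c := by linarith
            _ ≤ max (x-c) (x+c) := le_max_right _ _
        · calc x + θx ≤ x + c := by linarith
            _ ≤ max (x-c) (x+c) := le_max_right _ _
    · exact MeasureTheory.ae_of_all _ (fun t => P_nonneg hw t)
    · exact (P_continuous hw).intervalIntegrable _ _
  have h3 : |∫ t in (x-c)..(x+c), P w t| = Q w (x + c) - Q w (x - c) := by
    rw [← Q_sub hw]
    apply _root_.abs_of_nonneg
    rw [Q_sub hw]
    apply intervalIntegral.integral_nonneg (by linarith)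
    exact fun t _ => P_nonneg hw t
  calc ‖∫ t in x..(x + θx), Fc' w t‖ ≤ _ := h1
    _ ≤ _ := h2
    _ = _ := h3

lemma H_integral (hw : ‖w‖ < 1) {c : ℝ} (hc : 0 ≤ c) :
    (∫ x in (0:ℝ)..(2*Real.pi), (Q w (x+c) - Q w (x-c))) = 2*c*(2*Real.pi) := by
  have hQc := Q_continuous hw
  have hQi : ∀ a b : ℝ, IntervalIntegrable (Q w) MeasureTheory.volume a b :=
    fun a b => hQc.intervalIntegrable a b
  have hQca : Continuous fun x : ℝ => Q w (x + c) := hQc.comp (continuous_add_right c)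
  have hQcs : Continuous fun x : ℝ => Q w (x - c) := hQc.comp (continuous_sub_right c)
  have hQcp : Continuous fun x : ℝ => Q w (x + 2*Real.pi) := hQc.comp (continuous_add_right _)
  rw [intervalIntegral.integral_sub (hQca.intervalIntegrable _ _) (hQcs.intervalIntegrable _ _)]
  rw [intervalIntegral.integral_comp_add_right (Q w) c,
    intervalIntegral.integral_comp_sub_right (Q w) c]
  have e1 : (∫ y in (0+c)..(2*Real.pi+c), Q w y)
      = (∫ y in (0+c)..(2*Real.pi-c), Q w y) + ∫ y in (2*Real.pi-c)..(2*Real.pi+c), Q w y :=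
    (intervalIntegral.integral_add_adjacent_intervals (hQi _ _) (hQi _ _)).symm
  have e2 : (∫ y in (0-c)..(2*Real.pi-c), Q w y)
      = (∫ y in (0-c)..(0+c), Q w y) + ∫ y in (0+c)..(2*Real.pi-c), Q w y :=
    (intervalIntegral.integral_add_adjacent_intervals (hQi _ _) (hQi _ _)).symm
  rw [e1, e2]
  have e3 : (∫ y in (2*Real.pi-c)..(2*Real.pi+c), Q w y)
      = ∫ u in (0-c)..(0+c), Q w (u + 2*Real.pi) := by
    rw [intervalIntegral.integral_comp_add_right (Q w) (2*Real.pi)]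
    congr 1 <;> ring
  rw [e3]
  have e4 : (∫ u in (0-c)..(0+c), Q w (u + 2*Real.pi)) - ∫ y in (0-c)..(0+c), Q w y
      = ∫ u in (0-c)..(0+c), (Q w (u + 2*Real.pi) - Q w u) := by
    rw [intervalIntegral.integral_sub (hQcp.intervalIntegrable _ _) (hQi _ _)]
  have e5 : (∫ u in (0-c)..(0+c), (Q w (u + 2*Real.pi) - Q w u)) = 2*c*(2*Real.pi) := by
    rw [intervalIntegral.integral_congr (g := fun _ => 2*Real.pi) (fun u _ => Q_period hw u)]
    simp; ring
  calc (∫ y in (0+c)..(2*Real.pi-c), Q w y) + ((∫ u in (0-c)..(0+c), Q w (u + 2*Real.pi)))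
        - ((∫ y in (0-c)..(0+c), Q w y) + ∫ y in (0+c)..(2*Real.pi-c), Q w y)
      = (∫ u in (0-c)..(0+c), Q w (u + 2*Real.pi)) - ∫ y in (0-c)..(0+c), Q w y := by ring
    _ = 2*c*(2*Real.pi) := by rw [e4, e5]

lemma avg_diff_bound (hw : ‖w‖ < 1) (φ : ℂ → ℂ)
    (hφ : Continuous (fun x : ℝ => φ (Complex.exp (Complex.I * x))))
    {c : ℝ} (hc : 0 ≤ c) (θ : ℝ → ℝ) (hθ : ∀ x, |θ x| ≤ c)
    (hrep : ∀ x : ℝ, φ (Complex.exp (Complex.I * x)) = Complex.exp (Complex.I * ((x + θ x : ℝ) : ℂ))) :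
    ‖avgMap φ w + w‖ ≤ 2 * c := by
  set Φ : ℝ → ℂ := fun x => (φ (Complex.exp (Complex.I * x)) - w) /
    (1 - (starRingEnd ℂ) w * φ (Complex.exp (Complex.I * x))) with hΦ
  have habsφ : ∀ x : ℝ, ‖φ (Complex.exp (Complex.I * x))‖ ≤ 1 := by
    intro x; rw [hrep x]; exact (abs_exp_I_mul _).le
  have hΦcont : Continuous Φ := by
    apply Continuous.div (hφ.sub continuous_const) (continuous_const.sub (continuous_const.mul hφ))
    exact fun x => den_ne hw (habsφ x)
  have hΦF : ∀ x : ℝ, Φ x = Fc w (x + θ x) := by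
    intro x
    simp only [hΦ, Fc, hrep x]
  have hFcont : Continuous (Fc w) := by
    unfold Fc
    apply Continuous.div (by fun_prop) (by fun_prop)
    exact fun x => den_ne hw (abs_exp_I_mul x).le
  have hsum : avgMap φ w + w
      = (1 / (2 * Real.pi)) • ∫ x in (0:ℝ)..(2*Real.pi), (Φ x - Fc w x) := by
    rw [intervalIntegral.integral_sub (hΦcont.intervalIntegrable _ _)
      (hFcont.intervalIntegrable _ _), smul_sub]
    have : ((1 : ℝ) / (2 * Real.pi)) • ∫ x in (0:ℝ)..(2*Real.pi), Fc w x = -w := by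
      show ((1 : ℝ) / (2 * Real.pi)) • ∫ x in (0:ℝ)..(2*Real.pi),
        (Complex.exp (Complex.I * x) - w) / (1 - (starRingEnd ℂ) w * Complex.exp (Complex.I * x)) = -w
      rw [avg_id hw, Complex.real_smul]
      push_cast
      rw [← mul_assoc, one_div,
        inv_mul_cancel₀ (by simp [Real.pi_ne_zero] : (2*(Real.pi:ℂ)) ≠ 0), one_mul]
    rw [this, avgMap]
    ring
  rw [hsum]
  rw [norm_smul]
  have hnorm1 : ‖(1 / (2 * Real.pi) : ℝ)‖ = 1 / (2 * Real.pi) := by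
    rw [Real.norm_eq_abs, abs_of_pos (by positivity)]
  rw [hnorm1]
  have hb1 : ‖∫ x in (0:ℝ)..(2*Real.pi), (Φ x - Fc w x)‖
      ≤ ∫ x in (0:ℝ)..(2*Real.pi), ‖Φ x - Fc w x‖ :=
    intervalIntegral.norm_integral_le_integral_norm Real.two_pi_pos.le
  have hb2 : (∫ x in (0:ℝ)..(2*Real.pi), ‖Φ x - Fc w x‖)
      ≤ ∫ x in (0:ℝ)..(2*Real.pi), (Q w (x+c) - Q w (x-c)) := by
    apply intervalIntegral.integral_mono_on Real.two_pi_pos.le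
    · exact ((hΦcont.sub hFcont).norm).intervalIntegrable _ _
    · exact (((Q_continuous hw).comp (continuous_add_right c)).sub
        ((Q_continuous hw).comp (continuous_sub_right c))).intervalIntegrable _ _
    · intro x _
      rw [hΦF x]
      exact pointwise_bound hw hc (hθ x)
  calc (1 / (2 * Real.pi)) * ‖∫ x in (0:ℝ)..(2*Real.pi), (Φ x - Fc w x)‖
      ≤ (1 / (2 * Real.pi)) * (2*c*(2*Real.pi)) := by
        apply mul_le_mul_of_nonneg_left _ (by positivity)
        rw [← H_integral hw hc]
        exact hb1.trans hb2
    _ = 2 * c := by field_simp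

lemma avgMap_id (hw : ‖w‖ < 1) : avgMap (fun z => z) w = -w := by
  unfold avgMap
  rw [avg_id hw, Complex.real_smul]
  push_cast
  rw [← mul_assoc, one_div,
    inv_mul_cancel₀ (by simp [Real.pi_ne_zero] : (2*(Real.pi:ℂ)) ≠ 0), one_mul]

lemma arg_le_of_exp_eq {t : ℝ} {v : ℂ} (h : Complex.exp (Complex.I * t) = v) :
    |v.arg| ≤ |t| := by
  have : v.arg = toIocMod Real.two_pi_pos (-Real.pi) t := by
    rw [← h, mul_comm, Complex.arg_exp_mul_I]
  rw [this]
  set m := toIocMod Real.two_pi_pos (-Real.pi) t with hm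
  set k := toIocDiv Real.two_pi_pos (-Real.pi) t with hk
  have hdef : m = t - k • (2*Real.pi) := rfl
  have hmem := toIocMod_mem_Ioc Real.two_pi_pos (-Real.pi) t
  rw [← hm] at hmem
  have hpi : -Real.pi + 2*Real.pi = Real.pi := by ring
  rw [hpi] at hmem
  rcases eq_or_ne k 0 with h0 | h0
  · rw [hdef, h0]; simp
  · have hk1 : (1:ℝ) ≤ |(k:ℝ)| := by
      rw [← Int.cast_abs]
      exact_mod_cast Int.one_le_abs (by simpa using h0)
    have habs : |m| ≤ Real.pi := abs_le.2 ⟨by linarith [hmem.1], hmem.2⟩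
    have ht : t = m + (k:ℝ) * (2*Real.pi) := by
      rw [hdef]; push_cast [zsmul_eq_mul]; ring
    have h3 := abs_sub_abs_le_abs_sub ((k:ℝ)*(2*Real.pi)) (-m)
    rw [abs_neg, sub_neg_eq_add] at h3
    have h4 : (k:ℝ)*(2*Real.pi) + m = t := by rw [ht]; ring
    rw [h4, abs_mul, abs_of_pos Real.two_pi_pos] at h3
    nlinarith [Real.pi_pos]

lemma exp_arg_of_unit {v : ℂ} (hv : ‖v‖ = 1) :
    Complex.exp (Complex.I * v.arg) = v := by
  have := Complex.norm_mul_exp_arg_mul_I v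
  rw [hv] at this
  rw [mul_comm]
  simpa using this

lemma abs_arg_le_dS1 {ζ z : ℂ} (hζ : ‖ζ‖ = 1) (hz : ‖z‖ = 1) :
    |(z * (starRingEnd ℂ) ζ).arg| ≤ dS1 z ζ := by
  apply le_csInf
  · exact ⟨|z.arg - ζ.arg|, z.arg, ζ.arg,
      (exp_arg_of_unit hz).symm, (exp_arg_of_unit hζ).symm, rfl⟩
  · rintro d ⟨x₁, x₂, h₁, h₂, rfl⟩
    apply arg_le_of_exp_eq
    rw [h₁, h₂, ← Complex.exp_conj]
    rw [← Complex.exp_add]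
    congr 1
    simp [Complex.conj_I]
    push_cast
    ring

lemma mem_slitPlane_of_unit {v : ℂ} (hv : ‖v‖ = 1) (h1 : v ≠ -1) :
    v ∈ Complex.slitPlane := by
  rw [Complex.mem_slitPlane_iff]
  by_contra h
  push_neg at h
  obtain ⟨hre, him⟩ := h
  have hns : Complex.normSq v = 1 := by
    rw [← Complex.sq_norm, hv]; norm_num
  rw [Complex.normSq_apply, him] at hns
  have : v.re = -1 := by nlinarith
  exact h1 (Complex.ext this (by simp [him]))

/-- If `φ : S¹ → S¹` is continuous with `d_{S¹}(φ(ζ), ζ) < ε` for all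
`ζ ∈ S¹`, then `|ξ_φ(w) − ξ_id(w)| < 2ε` for every `w ∈ 𝔻`; equivalently, since
`ξ_id(w) = −w`, `|ξ_φ(w) + w| < 2ε`. -/
theorem stmt_7 (ε : ℝ) (hε : 0 < ε) (φ : ℂ → ℂ)
    (hcont : ContinuousOn φ {z : ℂ | ‖z‖ = 1})
    (hmaps : ∀ ζ : ℂ, ‖ζ‖ = 1 → ‖φ ζ‖ = 1)
    (hclose : ∀ ζ : ℂ, ‖ζ‖ = 1 → dS1 (φ ζ) ζ < ε) :
    ∀ w : ℂ, ‖w‖ < 1 →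
      ‖avgMap φ w - avgMap (fun z => z) w‖ < 2 * ε ∧
      ‖avgMap φ w + w‖ < 2 * ε := by
  intro w hw
  have hζ : ∀ x : ℝ, ‖Complex.exp (Complex.I * x)‖ = 1 := abs_exp_I_mul
  set v : ℝ → ℂ := fun x => φ (Complex.exp (Complex.I * x)) *
    (starRingEnd ℂ) (Complex.exp (Complex.I * x)) with hv
  have habsv : ∀ x, ‖v x‖ = 1 := fun x => by
    rw [hv]; simp only [norm_mul, Complex.norm_conj, hζ x, hmaps _ (hζ x), mul_one]
  set θ : ℝ → ℝ := fun x => (v x).arg with hθdef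
  have hone : ∀ x : ℝ, Complex.exp (Complex.I*x) * (starRingEnd ℂ) (Complex.exp (Complex.I*x)) = 1 := by
    intro x
    rw [Complex.mul_conj]
    norm_cast
    simp [Complex.normSq_eq_norm_sq, hζ x]
  have hrep : ∀ x : ℝ, φ (Complex.exp (Complex.I * x))
      = Complex.exp (Complex.I * ((x + θ x : ℝ) : ℂ)) := by
    intro x
    have h1 : Complex.exp (Complex.I * θ x) = v x := exp_arg_of_unit (habsv x)
    have h2 : Complex.exp (Complex.I * ((x + θ x : ℝ) : ℂ))
        = Complex.exp (Complex.I * x) * Complex.exp (Complex.I * θ x) := by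
      rw [← Complex.exp_add]; push_cast; ring_nf
    rw [h2, h1, hv]
    calc φ (Complex.exp (Complex.I * x))
        = φ (Complex.exp (Complex.I * x)) * (Complex.exp (Complex.I*x) *
          (starRingEnd ℂ) (Complex.exp (Complex.I*x))) := by rw [hone x, mul_one]
      _ = Complex.exp (Complex.I*x) * (φ (Complex.exp (Complex.I * x)) *
          (starRingEnd ℂ) (Complex.exp (Complex.I*x))) := by ring
  have hθε : ∀ x, |θ x| < ε := fun x =>
    lt_of_le_of_lt (abs_arg_le_dS1 (hζ x) (hmaps _ (hζ x))) (hclose _ (hζ x))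
  have hφcont : Continuous (fun x : ℝ => φ (Complex.exp (Complex.I * x))) :=
    hcont.comp_continuous (by fun_prop) (fun x => hζ x)
  obtain ⟨c, hc0, hcε, hθc⟩ : ∃ c : ℝ, 0 ≤ c ∧ c < ε ∧ ∀ x, |θ x| ≤ c := by
    rcases le_or_gt ε Real.pi with hεπ | hεπ
    · set S : Set ℂ := {z : ℂ | ‖z‖ = 1} with hS
      have hSc : IsCompact S := by
        have : S = Metric.sphere (0:ℂ) 1 := by
          ext z; simp [hS, Complex.dist_eq]
        rw [this]; exact isCompact_sphere 0 1
      set f : ℂ → ℝ := fun z => |(φ z * (starRingEnd ℂ) z).arg| with hf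
      have hdlt : ∀ z ∈ S, |(φ z * (starRingEnd ℂ) z).arg| < ε := fun z hz =>
        lt_of_le_of_lt (abs_arg_le_dS1 hz (hmaps z hz)) (hclose z hz)
      have hfcont : ContinuousOn f S := by
        intro z hz
        have hg : ContinuousWithinAt (fun z => φ z * (starRingEnd ℂ) z) S z :=
          (hcont z hz).mul (Complex.continuous_conj.continuousWithinAt)
        have hne1 : φ z * (starRingEnd ℂ) z ≠ -1 := by
          intro hcontra
          have := hdlt z hz
          rw [hcontra, Complex.arg_neg_one, abs_of_pos Real.pi_pos] at this
          linarith
        have hz' : ‖z‖ = 1 := hz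
        have habs1 : ‖φ z * (starRingEnd ℂ) z‖ = 1 := by
          rw [norm_mul, Complex.norm_conj, hz', hmaps z hz', one_mul]
        have harg : ContinuousAt Complex.arg (φ z * (starRingEnd ℂ) z) :=
          Complex.continuousAt_arg (mem_slitPlane_of_unit habs1 hne1)
        have harg' : ContinuousWithinAt (fun z => (φ z * (starRingEnd ℂ) z).arg) S z :=
          ContinuousAt.comp_continuousWithinAt (f := fun z : ℂ => φ z * (starRingEnd ℂ) z) harg hg
        exact harg'.abs
      obtain ⟨z₀, hz₀S, hz₀max⟩ := hSc.exists_isMaxOn ⟨1, by simp [hS]⟩ hfcont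
      refine ⟨f z₀, abs_nonneg _, hdlt z₀ hz₀S, fun x => hz₀max (hζ x)⟩
    · exact ⟨Real.pi, Real.pi_pos.le, hεπ, fun x => Complex.abs_arg_le_pi _⟩
  have hbound := avg_diff_bound hw φ hφcont hc0 θ hθc hrep
  have hlt : ‖avgMap φ w + w‖ < 2*ε := lt_of_le_of_lt hbound (by linarith)
  refine ⟨?_, hlt⟩
  rw [avgMap_id hw, sub_neg_eq_add]
  exact hlt
end

section
/- Let ε > 0 and let φ : S¹ → S¹ be continuous with d_{S¹}(φ(ζ), ζ) < ε for every ζ ∈ S¹. If w ∈ 𝔻 satisfies ξ_φ(w) = 0 (i.e. w is a barycenter of φ), then |w| < 2ε. -/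
section Stmt8Helpers


noncomputable def ee (x : ℝ) : ℂ := Complex.exp (Complex.I * (x : ℂ))

lemma abs_ee (x : ℝ) : ‖ee x‖ = 1 := by
  simp [ee, Complex.norm_exp]

lemma ee_per (x : ℝ) : ee (x + 2 * Real.pi) = ee x := by
  unfold ee
  push_cast
  rw [mul_add, Complex.exp_add]
  simp [mul_comm Complex.I, Complex.exp_two_pi_mul_I]

lemma hasDerivAt_ee (x : ℝ) : HasDerivAt ee (Complex.I * ee x) x := by
  have h1 : HasDerivAt (fun y : ℝ => ((y : ℂ))) 1 x := Complex.ofRealCLM.hasDerivAt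
  have h2 := (h1.const_mul Complex.I).cexp
  show HasDerivAt (fun y : ℝ => Complex.exp (Complex.I * (y:ℂ))) (Complex.I * Complex.exp (Complex.I * (x:ℂ))) x
  simpa [mul_comm] using h2

section
variable {c : ℂ} (hc : ‖c‖ < 1)

lemma dpos (hc : ‖c‖ < 1) (x : ℝ) : 0 < (1 - c * ee x).re := by
  have : ‖c * ee x‖ < 1 := by
    rw [norm_mul, abs_ee, mul_one]; exact hc
  have h2 : (c * ee x).re < 1 := lt_of_le_of_lt (Complex.re_le_norm _) this
  simp only [Complex.sub_re, Complex.one_re]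
  linarith

lemma dslit (hc : ‖c‖ < 1) (x : ℝ) : (1 - c * ee x) ∈ Complex.slitPlane :=
  Or.inl (dpos hc x)

lemma dne (hc : ‖c‖ < 1) (x : ℝ) : (1 - c * ee x) ≠ 0 :=
  Complex.slitPlane_ne_zero (dslit hc x)

lemma hasDerivAt_L (hc : ‖c‖ < 1) (x : ℝ) :
    HasDerivAt (fun x : ℝ => Complex.log (1 - c * ee x))
      ((-(c * (Complex.I * ee x))) / (1 - c * ee x)) x := by
  have h1 : HasDerivAt (fun x : ℝ => 1 - c * ee x) (-(c * (Complex.I * ee x))) x := by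
    simpa using ((hasDerivAt_ee x).const_mul c).const_sub 1
  exact h1.clog_real (dslit hc x)
end

lemma real_aux (a b : ℝ) (hD : 1 - a * 2 + a ^ 2 + b ^ 2 ≠ 0) :
    1 + a * (1 - a * 2 + a ^ 2 + b ^ 2)⁻¹ * 2 +
      (-(a ^ 2 * (1 - a * 2 + a ^ 2 + b ^ 2)⁻¹ * 2) -
        b ^ 2 * (1 - a * 2 + a ^ 2 + b ^ 2)⁻¹ * 2) =
    -(a ^ 2 * (1 - a * 2 + a ^ 2 + b ^ 2)⁻¹) - b ^ 2 * (1 - a * 2 + a ^ 2 + b ^ 2)⁻¹ +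
      (1 - a * 2 + a ^ 2 + b ^ 2)⁻¹ := by
  field_simp
  ring

lemma aux_im (ζ : ℂ) (hu : (1:ℂ) - ζ ≠ 0) :
    1 - 2 * ((-(Complex.I * ζ)) / (1 - ζ)).im
      = (1 - Complex.normSq ζ) / Complex.normSq (1 - ζ) := by
  have hns : Complex.normSq (1 - ζ) ≠ 0 := by
    simpa [Complex.normSq_eq_zero] using hu
  rw [Complex.div_im]
  simp only [Complex.sub_re, Complex.sub_im, Complex.one_re, Complex.one_im,
    Complex.neg_re, Complex.neg_im, Complex.mul_re, Complex.mul_im,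
    Complex.I_re, Complex.I_im, Complex.normSq_apply]
  have hD : 1 - ζ.re * 2 + ζ.re ^ 2 + ζ.im ^ 2 ≠ 0 := by
    have h2 : Complex.normSq (1 - ζ) = 1 - ζ.re * 2 + ζ.re ^ 2 + ζ.im ^ 2 := by
      simp [Complex.normSq_apply, Complex.sub_re, Complex.sub_im]; ring
    rw [h2] at hns; exact hns
  ring_nf
  have hD2 : (1 + ζ.im ^ 2 - ζ.re * 2 + ζ.re ^ 2) ≠ 0 := by
    intro h; exact hD (by linarith)
  field_simp [hD2]
  ring

noncomputable def Th (c : ℂ) (x : ℝ) : ℝ := x - 2 * (Complex.log (1 - c * ee x)).im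

lemma hasDerivAt_Th (hc : ‖c‖ < 1) (x : ℝ) :
    HasDerivAt (Th c)
      ((1 - Complex.normSq (c * ee x)) / Complex.normSq (1 - c * ee x)) x := by
  have hL := hasDerivAt_L hc x
  have hIm : HasDerivAt (fun x : ℝ => (Complex.log (1 - c * ee x)).im)
      ((-(c * (Complex.I * ee x)) / (1 - c * ee x)).im) x :=
    (Complex.imCLM.hasFDerivAt.comp_hasDerivAt x hL)
  have h := (hasDerivAt_id x).sub (hIm.const_mul 2)
  have e1 : -(c * (Complex.I * ee x)) = -(Complex.I * (c * ee x)) := by ring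
  have := aux_im (c * ee x) (dne hc x)
  rw [e1] at h
  rw [← this]
  exact h

lemma Th_deriv_pos (hc : ‖c‖ < 1) (x : ℝ) :
    0 < (1 - Complex.normSq (c * ee x)) / Complex.normSq (1 - c * ee x) := by
  apply div_pos
  · have : ‖c * ee x‖ < 1 := by rw [norm_mul, abs_ee, mul_one]; exact hc
    have h2 : Complex.normSq (c * ee x) < 1 := by
      have := Complex.sq_norm (c * ee x)
      nlinarith [norm_nonneg (c * ee x)]
    linarith
  · exact Complex.normSq_pos.2 (dne hc x)

lemma Th_strictMono (hc : ‖c‖ < 1) : StrictMono (Th c) := by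
  apply strictMono_of_deriv_pos
  intro x
  rw [(hasDerivAt_Th hc x).deriv]
  exact Th_deriv_pos hc x

lemma Th_continuous (hc : ‖c‖ < 1) : Continuous (Th c) := by
  have : Differentiable ℝ (Th c) := fun x => (hasDerivAt_Th hc x).differentiableAt
  exact this.continuous

lemma Th_per (hc : ‖c‖ < 1) (x : ℝ) : Th c (x + 2 * Real.pi) = Th c x + 2 * Real.pi := by
  unfold Th
  rw [ee_per]
  ring

lemma mobius_eq {c : ℂ} (hc : ‖c‖ < 1) (x : ℝ) :
    (ee x - (starRingEnd ℂ) c) / (1 - c * ee x) = ee (Th c x) := by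
  set w := (starRingEnd ℂ) c with hwc
  set d := 1 - c * ee x with hdd
  have hd : d ≠ 0 := dne hc x
  have ha : (‖d‖ : ℂ) ≠ 0 := by
    exact_mod_cast (norm_ne_zero_iff.mpr hd)
  have e2 : Complex.exp (↑(Complex.arg d) * Complex.I) = d / ↑(‖d‖) := by
    rw [eq_div_iff ha, mul_comm]
    exact Complex.norm_mul_exp_arg_mul_I d
  have hsq : (‖d‖ : ℂ) * (‖d‖) = d * (starRingEnd ℂ) d := by
    rw [Complex.mul_conj, ← Complex.ofReal_mul]
    norm_cast
    rw [← Complex.sq_norm]; ring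
  have key : ee (Th c x) * Complex.exp (↑(Complex.arg d) * Complex.I) *
      Complex.exp (↑(Complex.arg d) * Complex.I) = ee x := by
    unfold ee Th
    rw [← Complex.exp_add, ← Complex.exp_add]
    congr 1
    rw [← Complex.log_im, ← hdd]
    push_cast
    ring
  have h1 : ee x * (starRingEnd ℂ) (ee x) = 1 := by
    rw [Complex.mul_conj]
    norm_cast
    rw [← Complex.sq_norm, abs_ee]; norm_num
  have hnum : ee x - w = ee x * (starRingEnd ℂ) d := by
    rw [hdd, map_sub, map_one, map_mul, hwc]
    calc ee x - (starRingEnd ℂ) c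
        = ee x - (starRingEnd ℂ) c * (ee x * (starRingEnd ℂ) (ee x)) := by rw [h1, mul_one]
      _ = ee x * (1 - (starRingEnd ℂ) c * (starRingEnd ℂ) (ee x)) := by ring
  rw [e2] at key
  have k2 : ee (Th c x) * d * d = ee x * ((‖d‖ : ℂ) * (‖d‖)) := by
    field_simp at key
    linear_combination key
  rw [hsq] at k2
  rw [hnum, div_eq_iff hd]
  have k3 : (ee x * (starRingEnd ℂ) d) * d = (ee (Th c x) * d) * d := by
    linear_combination -k2
  exact mul_right_cancel₀ hd k3

lemma continuous_ee : Continuous ee :=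
  Complex.continuous_exp.comp (continuous_const.mul Complex.continuous_ofReal)

lemma continuous_mob {c : ℂ} (hc : ‖c‖ < 1) (w : ℂ) :
    Continuous (fun x : ℝ => (ee x - w) / (1 - c * ee x)) := by
  apply Continuous.div
  · exact continuous_ee.sub continuous_const
  · exact continuous_const.sub (continuous_const.mul continuous_ee)
  · exact fun x => dne hc x

lemma integral_mobius {c : ℂ} (hc : ‖c‖ < 1) (hc0 : c ≠ 0) :
    (∫ x in (0:ℝ)..(2*Real.pi), (ee x - (starRingEnd ℂ) c) / (1 - c * ee x))
      = -(2*Real.pi) * (starRingEnd ℂ) c := by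
  set w := (starRingEnd ℂ) c with hwc
  set K := (1 - w*c)/c * Complex.I with hK
  set F : ℝ → ℂ := fun x => -w * (x:ℂ) + K * Complex.log (1 - c * ee x) with hF
  have hFd : ∀ x ∈ Set.uIcc (0:ℝ) (2*Real.pi),
      HasDerivAt F ((ee x - w)/(1 - c * ee x)) x := by
    intro x _
    have h1 : HasDerivAt (fun x:ℝ => -w * (x:ℂ)) (-w * 1) x :=
      (Complex.ofRealCLM.hasDerivAt (x := x)).const_mul (-w)
    have h2 := (hasDerivAt_L hc x).const_mul K
    have h3 := h1.add h2
    have hd := dne hc x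
    have e4 : K * (-(c * (Complex.I * ee x))) = (1 - w*c) * ee x := by
      calc K * (-(c * (Complex.I * ee x)))
          = -((1 - w*c)/c*c) * (Complex.I*Complex.I) * ee x := by rw [hK]; ring
        _ = (1 - w*c)/c*c * ee x := by rw [Complex.I_mul_I]; ring
        _ = (1 - w*c) * ee x := by rw [div_mul_cancel₀ _ hc0]
    have e5 : K * ((-(c * (Complex.I * ee x))) / (1 - c * ee x))
        = (1 - w*c) * ee x / (1 - c * ee x) := by
      rw [mul_div_assoc'] at *
      rw [e4]
    rw [e5] at h3
    have e6 : (ee x - w)/(1 - c * ee x) = -w * 1 + (1 - w*c) * ee x / (1 - c * ee x) := by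
      rw [mul_one, neg_add_eq_sub, eq_sub_iff_add_eq, div_add' _ _ _ hd, div_left_inj' hd]
      ring
    rw [e6]
    exact h3
  have hInt : IntervalIntegrable (fun x => (ee x - w)/(1 - c * ee x))
      MeasureTheory.volume 0 (2*Real.pi) :=
    (continuous_mob hc w).intervalIntegrable _ _
  rw [intervalIntegral.integral_eq_sub_of_hasDerivAt hFd hInt]
  have hee : ee (2*Real.pi) = ee 0 := by simpa using ee_per 0
  rw [hF]
  simp only [hee]
  push_cast
  ring

lemma dne_gen {c u : ℂ} (hc : ‖c‖ < 1) (hu : ‖u‖ = 1) :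
    (1 : ℂ) - c * u ≠ 0 := by
  intro h
  have h1 : c * u = 1 := by linear_combination -h
  have : ‖c * u‖ = 1 := by rw [h1, norm_one]
  rw [norm_mul, hu, mul_one] at this
  linarith

lemma exp_sub_bound (a b : ℝ) : ‖ee a - ee b‖ ≤ |a - b| := by
  have e1 : ee a = ee ((a+b)/2) * Complex.exp ((((a-b)/2 : ℝ) : ℂ) * Complex.I) := by
    unfold ee; rw [← Complex.exp_add]; congr 1; push_cast; ring
  have e2 : ee b = ee ((a+b)/2) * Complex.exp (-((((a-b)/2 : ℝ) : ℂ) * Complex.I)) := by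
    unfold ee; rw [← Complex.exp_add]; congr 1; push_cast; ring
  have hsin : Complex.exp ((((a-b)/2 : ℝ) : ℂ) * Complex.I)
        - Complex.exp (-((((a-b)/2 : ℝ) : ℂ) * Complex.I))
      = 2 * Complex.I * Complex.sin (((a-b)/2 : ℝ) : ℂ) := by
    rw [Complex.sin, neg_mul]
    linear_combination (Complex.exp ((((a-b)/2 : ℝ) : ℂ) * Complex.I)
      - Complex.exp (-((((a-b)/2 : ℝ) : ℂ) * Complex.I))) * Complex.I_mul_I
  have e3 : ee a - ee b = ee ((a+b)/2) * (2 * Complex.I * Complex.sin (((a-b)/2 : ℝ) : ℂ)) := by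
    rw [e1, e2, ← mul_sub, hsin]
  rw [e3, norm_mul, abs_ee, one_mul, ← Complex.ofReal_sin]
  rw [norm_mul, norm_mul]
  simp only [Complex.norm_two, Complex.norm_I, Complex.norm_real, Real.norm_eq_abs, mul_one]
  have h1 : |Real.sin ((a-b)/2)| ≤ |(a-b)/2| := Real.abs_sin_le_abs
  have h2 : |(a-b)/2| = |a - b|/2 := by rw [abs_div]; norm_num
  rw [h2] at h1
  linarith

lemma rep {ε : ℝ} (x : ℝ) {u : ℂ} (hu : ‖u‖ = 1) (h : dS1 u (ee x) < ε) :
    ∃ θ : ℝ, |θ| < ε ∧ u = ee (x + θ) := by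
  have hux : u = Complex.exp (Complex.I * (Complex.arg u : ℂ)) := by
    have h2 := Complex.norm_mul_exp_arg_mul_I u
    rw [hu] at h2
    rw [mul_comm]
    simpa using h2.symm
  set S := {d : ℝ | ∃ x₁ x₂ : ℝ, u = Complex.exp (Complex.I * (x₁ : ℂ)) ∧
    ee x = Complex.exp (Complex.I * (x₂ : ℂ)) ∧ d = |x₁ - x₂|} with hS
  have hne : S.Nonempty := ⟨|Complex.arg u - x|, Complex.arg u, x, hux, rfl, rfl⟩
  have hbdd : BddBelow S := ⟨0, by rintro d ⟨x₁, x₂, _, _, rfl⟩; positivity⟩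
  have hlt : sInf S < ε := h
  obtain ⟨d, hdS, hdε⟩ := (csInf_lt_iff hbdd hne).1 hlt
  obtain ⟨x₁, x₂, hu1, hz2, rfl⟩ := hdS
  refine ⟨x₁ - x₂, hdε, ?_⟩
  have : ee (x + (x₁ - x₂)) = ee x * Complex.exp (Complex.I * ((x₁ - x₂ : ℝ) : ℂ)) := by
    unfold ee; rw [← Complex.exp_add]; push_cast; ring_nf
  rw [this, hz2, ← Complex.exp_add, hu1]
  congr 1
  push_cast
  ring


end Stmt8Helpers

/-- If `φ : S¹ → S¹` is continuous with `d_{S¹}(φ(ζ), ζ) < ε` for all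
`ζ ∈ S¹`, then any barycenter `w ∈ 𝔻` of `φ` (i.e. `ξ_φ(w) = 0`) satisfies `|w| < 2ε`. -/
theorem stmt_8 (ε : ℝ) (hε : 0 < ε) (φ : ℂ → ℂ)
    (hcont : ContinuousOn φ {z : ℂ | ‖z‖ = 1})
    (hmaps : ∀ ζ : ℂ, ‖ζ‖ = 1 → ‖φ ζ‖ = 1)
    (hclose : ∀ ζ : ℂ, ‖ζ‖ = 1 → dS1 (φ ζ) ζ < ε) :
    ∀ w : ℂ, ‖w‖ < 1 → avgMap φ w = 0 → ‖w‖ < 2 * ε := by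
  intro w hw h0
  rcases eq_or_ne w 0 with rfl | hw0
  · simpa using (by positivity : (0:ℝ) < 2 * ε)
  have hπ : (0:ℝ) < Real.pi := Real.pi_pos
  set c := (starRingEnd ℂ) w with hcw
  have hc : ‖c‖ < 1 := by rwa [hcw, Complex.norm_conj]
  have hc0 : c ≠ 0 := by simp [hcw, hw0]
  have hwcc : (starRingEnd ℂ) c = w := by rw [hcw, Complex.conj_conj]
  have hgc : Continuous (fun x : ℝ => φ (ee x)) := by
    apply hcont.comp_continuous continuous_ee
    intro x; exact abs_ee x
  have hgabs : ∀ x : ℝ, ‖φ (ee x)‖ = 1 := fun x => hmaps _ (abs_ee x)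
  set p : ℝ → ℂ := fun x => (ee x - w) / (1 - c * ee x) with hp
  set q : ℝ → ℂ := fun x => (φ (ee x) - w) / (1 - c * φ (ee x)) with hq
  have hpc : Continuous p := continuous_mob hc w
  have hqc : Continuous q := by
    apply Continuous.div (hgc.sub continuous_const)
      (continuous_const.sub (continuous_const.mul hgc))
    exact fun x => dne_gen hc (hgabs x)
  -- integral of q is 0
  have hq0 : (∫ x in (0:ℝ)..(2*Real.pi), q x) = 0 := by
    unfold avgMap at h0
    rw [smul_eq_zero] at h0
    rcases h0 with h | h
    · exfalso; rw [div_eq_zero_iff] at h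
      rcases h with h | h
      · exact one_ne_zero h
      · rw [mul_eq_zero] at h; rcases h with h | h
        · norm_num at h
        · exact (ne_of_gt hπ) h
    · exact h
  -- integral of p
  have hpI : (∫ x in (0:ℝ)..(2*Real.pi), p x) = -(2*Real.pi) * w := by
    have h := integral_mobius hc hc0
    simp only [hwcc] at h
    exact h
  have hmono := Th_strictMono hc
  set G : ℝ → ℝ := fun x => Th c (x+ε) - Th c (x-ε) with hG
  have hGc : Continuous G :=
    ((Th_continuous hc).comp (continuous_id.add continuous_const)).sub
      ((Th_continuous hc).comp (continuous_id.sub continuous_const))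
  have claim1 : ∀ x : ℝ, ‖p x - q x‖ < G x := by
    intro x
    obtain ⟨θ, hθ, hrep⟩ := rep x (hgabs x) (hclose (ee x) (abs_ee x))
    have hθ1 : -ε < θ := (abs_lt.1 hθ).1
    have hθ2 : θ < ε := (abs_lt.1 hθ).2
    have hpx : p x = ee (Th c x) := by
      have h := mobius_eq hc x
      rw [hwcc] at h
      exact h
    have hqx : q x = ee (Th c (x + θ)) := by
      have h := mobius_eq hc (x + θ)
      rw [hwcc] at h
      rw [hq]
      simp only
      rw [hrep]
      exact h
    rw [hpx, hqx]
    have hb := exp_sub_bound (Th c x) (Th c (x+θ))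
    have h1 : Th c (x+θ) ≤ Th c (x+ε) := hmono.monotone (by linarith)
    have h2 : Th c (x-ε) < Th c x := hmono (by linarith)
    have h3 : Th c (x-ε) ≤ Th c (x+θ) := hmono.monotone (by linarith)
    have h4 : Th c x < Th c (x+ε) := hmono (by linarith)
    have habs : |Th c x - Th c (x+θ)| < Th c (x+ε) - Th c (x-ε) := by
      rw [abs_sub_lt_iff]
      constructor <;> linarith
    have hGx : G x = Th c (x+ε) - Th c (x-ε) := rfl
    rw [hGx]
    linarith
  -- strict integral inequality
  have hfc : Continuous (fun x => ‖p x - q x‖) :=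
    continuous_norm.comp (hpc.sub hqc)
  have h2π : (0:ℝ) < 2*Real.pi := by linarith
  have claim2 : (∫ x in (0:ℝ)..(2*Real.pi), ‖p x - q x‖)
      < ∫ x in (0:ℝ)..(2*Real.pi), G x := by
    have hpos : 0 < ∫ x in (0:ℝ)..(2*Real.pi), (G x - ‖p x - q x‖) := by
      apply intervalIntegral.intervalIntegral_pos_of_pos_on
      · exact (hGc.sub hfc).intervalIntegrable _ _
      · intro x _
        have := claim1 x
        simp only [sub_pos]
        exact this
      · exact h2π
    rw [intervalIntegral.integral_sub (hGc.intervalIntegrable _ _)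
      (hfc.intervalIntegrable _ _)] at hpos
    linarith
  -- integral of G
  have hTi : ∀ a b : ℝ, IntervalIntegrable (Th c) MeasureTheory.volume a b :=
    fun a b => (Th_continuous hc).intervalIntegrable a b
  have claim3 : (∫ x in (0:ℝ)..(2*Real.pi), G x) = 4 * Real.pi * ε := by
    have h1 : (∫ x in (0:ℝ)..(2*Real.pi), Th c (x + ε)) = ∫ x in ε..(2*Real.pi+ε), Th c x := by
      simpa using intervalIntegral.integral_comp_add_right (a := (0:ℝ)) (b := 2*Real.pi) (Th c) ε
    have h2 : (∫ x in (0:ℝ)..(2*Real.pi), Th c (x - ε)) = ∫ x in (-ε)..(2*Real.pi-ε), Th c x := by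
      simpa using intervalIntegral.integral_comp_sub_right (a := (0:ℝ)) (b := 2*Real.pi) (Th c) ε
    have hsplitA : (∫ x in ε..(2*Real.pi+ε), Th c x)
        = (∫ x in ε..(2*Real.pi-ε), Th c x) + ∫ x in (2*Real.pi-ε)..(2*Real.pi+ε), Th c x :=
      (intervalIntegral.integral_add_adjacent_intervals (hTi _ _) (hTi _ _)).symm
    have hsplitB : (∫ x in (-ε)..(2*Real.pi-ε), Th c x)
        = (∫ x in (-ε)..ε, Th c x) + ∫ x in ε..(2*Real.pi-ε), Th c x :=
      (intervalIntegral.integral_add_adjacent_intervals (hTi _ _) (hTi _ _)).symm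
    have hshift : (∫ x in (2*Real.pi-ε)..(2*Real.pi+ε), Th c x)
        = ∫ x in (-ε)..ε, Th c (x + 2*Real.pi) := by
      rw [intervalIntegral.integral_comp_add_right (a := -ε) (b := ε) (Th c) (2*Real.pi)]
      congr 1 <;> ring
    have hper : (∫ x in (-ε)..ε, Th c (x + 2*Real.pi))
        = (∫ x in (-ε)..ε, Th c x) + 4*Real.pi*ε := by
      rw [intervalIntegral.integral_congr (g := fun x => Th c x + 2*Real.pi)
        (fun x _ => Th_per hc x)]
      rw [intervalIntegral.integral_add (hTi _ _) intervalIntegrable_const,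
        intervalIntegral.integral_const]
      simp only [smul_eq_mul]
      ring
    have hIa : IntervalIntegrable (fun x => Th c (x + ε)) MeasureTheory.volume 0 (2*Real.pi) :=
      ((Th_continuous hc).comp (continuous_id.add continuous_const)).intervalIntegrable _ _
    have hIb : IntervalIntegrable (fun x => Th c (x - ε)) MeasureTheory.volume 0 (2*Real.pi) :=
      ((Th_continuous hc).comp (continuous_id.sub continuous_const)).intervalIntegrable _ _
    have hsub : (∫ x in (0:ℝ)..(2*Real.pi), G x)
        = (∫ x in (0:ℝ)..(2*Real.pi), Th c (x+ε)) - ∫ x in (0:ℝ)..(2*Real.pi), Th c (x-ε) := by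
      rw [hG]
      exact intervalIntegral.integral_sub hIa hIb
    rw [hsub, h1, h2, hsplitA, hsplitB, hshift, hper]
    ring
  -- lower bound
  have claim4 : 2*Real.pi * ‖w‖ ≤ ∫ x in (0:ℝ)..(2*Real.pi), ‖p x - q x‖ := by
    have hPQ : (∫ x in (0:ℝ)..(2*Real.pi), (p x - q x)) = -(2*Real.pi) * w := by
      rw [intervalIntegral.integral_sub (hpc.intervalIntegrable _ _) (hqc.intervalIntegrable _ _),
        hpI, hq0, sub_zero]
    have hle := intervalIntegral.norm_integral_le_integral_norm
      (f := fun x => p x - q x) (μ := MeasureTheory.volume) (le_of_lt h2π)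
    rw [hPQ] at hle
    have e1 : ‖-(2*(Real.pi:ℂ))*w‖ = 2*Real.pi * ‖w‖ := by
      rw [norm_mul, norm_neg]
      congr 1
      have e2 : (2*(Real.pi:ℂ)) = ((2*Real.pi : ℝ) : ℂ) := by push_cast; ring
      rw [e2, Complex.norm_real, Real.norm_eq_abs, abs_of_pos h2π]
    have e3 : (-(2*Real.pi)*w : ℂ) = -(2*(Real.pi:ℂ))*w := by push_cast; ring
    rw [e3, e1] at hle
    calc 2*Real.pi * ‖w‖ ≤ ∫ x in (0:ℝ)..(2*Real.pi), ‖p x - q x‖ := hle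
      _ = ∫ x in (0:ℝ)..(2*Real.pi), ‖p x - q x‖ := by
          rfl
  nlinarith [claim2, claim3, claim4, hπ]
end

section
/- Let φ, ψ : S¹ → S¹ be continuous. Then for every w in the open unit disk 𝔻, one has |ξ_φ(w) − ξ_ψ(w)| ≤ ((1 + |w|)/(1 − |w|))·‖φ − ψ‖_{S¹}. -/
/-- `‖φ − ψ‖_{S¹} = sup_{ζ∈S¹} d_{S¹}(φ(ζ), ψ(ζ))`, the uniform arc-length
distance between two circle maps. -/
noncomputable def supDistS1 (φ ψ : ℂ → ℂ) : ℝ :=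
  ⨆ ζ : {z : ℂ // ‖z‖ = 1}, dS1 (φ ζ.val) (ψ ζ.val)

lemma abs_expI_sub_one (θ : ℝ) : ‖Complex.exp (Complex.I * θ) - 1‖ ≤ |θ| := by
  have h : ‖Complex.exp (Complex.I * θ) - 1‖ ^ 2 = 2 - 2 * Real.cos θ := by
    rw [mul_comm, Complex.exp_mul_I, Complex.sq_norm, Complex.normSq_apply]
    simp [Complex.add_re, Complex.add_im, Complex.sub_re, Complex.sub_im, Complex.mul_re,
      Complex.mul_im, Complex.I_re, Complex.I_im, Complex.cos_ofReal_re, Complex.sin_ofReal_re,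
      Complex.cos_ofReal_im, Complex.sin_ofReal_im]
    nlinarith [Real.sin_sq_add_cos_sq θ]
  have hc := Real.one_sub_sq_div_two_le_cos (x := θ)
  nlinarith [norm_nonneg (Complex.exp (Complex.I * θ) - 1), abs_nonneg θ, _root_.sq_abs θ]

lemma abs_expI_sub (x y : ℝ) :
    ‖Complex.exp (Complex.I * x) - Complex.exp (Complex.I * y)‖ ≤ |x - y| := by
  have h : Complex.exp (Complex.I * x) - Complex.exp (Complex.I * y)
      = Complex.exp (Complex.I * y) * (Complex.exp (Complex.I * (x - y : ℝ)) - 1) := by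
    rw [mul_sub, ← Complex.exp_add]
    push_cast
    ring_nf
  rw [h, norm_mul]
  have h1 : ‖Complex.exp (Complex.I * y)‖ = 1 := by
    rw [Complex.norm_exp]; simp
  rw [h1, one_mul]
  exact abs_expI_sub_one _

lemma eq_expI_arg {a : ℂ} (ha : ‖a‖ = 1) : a = Complex.exp (Complex.I * (a.arg : ℂ)) := by
  rw [mul_comm]
  conv_lhs => rw [← Complex.norm_mul_exp_arg_mul_I a]
  rw [ha]; simp

lemma abs_le_dS1 {a b : ℂ} (ha : ‖a‖ = 1) (hb : ‖b‖ = 1) :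
    ‖a - b‖ ≤ dS1 a b := by
  apply le_csInf
  · exact ⟨|a.arg - b.arg|, a.arg, b.arg, eq_expI_arg ha, eq_expI_arg hb, rfl⟩
  · rintro d ⟨x₁, x₂, h1, h2, rfl⟩
    rw [h1, h2]; exact abs_expI_sub x₁ x₂

lemma dS1_le_two_pi {a b : ℂ} (ha : ‖a‖ = 1) (hb : ‖b‖ = 1) :
    dS1 a b ≤ 2 * Real.pi := by
  have h : dS1 a b ≤ |a.arg - b.arg| :=
    csInf_le ⟨0, by rintro d ⟨x₁, x₂, _, _, rfl⟩; positivity⟩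
      ⟨a.arg, b.arg, eq_expI_arg ha, eq_expI_arg hb, rfl⟩
  have h1 := Complex.abs_arg_le_pi a
  have h2 := Complex.abs_arg_le_pi b
  have := abs_sub (a.arg) (b.arg)
  calc dS1 a b ≤ |a.arg - b.arg| := h
    _ ≤ |a.arg| + |b.arg| := abs_sub a.arg b.arg
    _ ≤ 2 * Real.pi := by linarith

lemma ptwise {w a b : ℂ} (hw : ‖w‖ < 1) (ha : ‖a‖ = 1)
    (hb : ‖b‖ = 1) :
    ‖(a - w) / (1 - (starRingEnd ℂ) w * a) - (b - w) / (1 - (starRingEnd ℂ) w * b)‖ ≤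
      (1 + ‖w‖) / (1 - ‖w‖) * ‖a - b‖ := by
  have hden : ∀ u : ℂ, ‖u‖ = 1 → (1 : ℂ) - (starRingEnd ℂ) w * u ≠ 0 := by
    intro u hu h
    have : (1 : ℂ) = (starRingEnd ℂ) w * u := by linear_combination h
    have := congrArg norm this
    simp [norm_mul, hu] at this
    simp [this] at hw
  have hda := hden a ha
  have hdb := hden b hb
  have key : (a - w) / (1 - (starRingEnd ℂ) w * a) - (b - w) / (1 - (starRingEnd ℂ) w * b)
      = ((a - b) * (1 - (starRingEnd ℂ) w * w)) /
        ((1 - (starRingEnd ℂ) w * a) * (1 - (starRingEnd ℂ) w * b)) := by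
    rw [div_sub_div _ _ hda hdb]
    congr 1
    ring
  rw [key, norm_div, norm_mul, norm_mul]
  have habs : ‖1 - (starRingEnd ℂ) w * w‖ = 1 - ‖w‖ ^ 2 := by
    rw [mul_comm, Complex.mul_conj]
    rw [← Complex.ofReal_one, ← Complex.ofReal_sub, Complex.norm_real, Real.norm_eq_abs,
      Complex.normSq_eq_norm_sq, abs_of_nonneg]
    nlinarith [norm_nonneg w]
  rw [habs]
  set r := ‖w‖ with hr
  set m := ‖a - b‖
  have hd1 : 1 - r ≤ ‖1 - (starRingEnd ℂ) w * a‖ := by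
    calc 1 - r = ‖(1 : ℂ)‖ - ‖(starRingEnd ℂ) w * a‖ := by
          simp [norm_mul, ha, hr]
      _ ≤ ‖1 - (starRingEnd ℂ) w * a‖ := by
          exact norm_sub_norm_le (1 : ℂ) ((starRingEnd ℂ) w * a)
  have hd2 : 1 - r ≤ ‖1 - (starRingEnd ℂ) w * b‖ := by
    calc 1 - r = ‖(1 : ℂ)‖ - ‖(starRingEnd ℂ) w * b‖ := by
          simp [norm_mul, hb, hr]
      _ ≤ ‖1 - (starRingEnd ℂ) w * b‖ := by
          exact norm_sub_norm_le (1 : ℂ) ((starRingEnd ℂ) w * b)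
  have hrpos : 0 < 1 - r := by linarith
  have hm : 0 ≤ m := norm_nonneg _
  have hC : (1 + r) / (1 - r) * (1 - r) = 1 + r := div_mul_cancel₀ _ (ne_of_gt hrpos)
  have hC0 : 0 ≤ (1 + r) / (1 - r) := by positivity
  rw [div_le_iff₀ (by nlinarith)]
  have h12 : (1 - r) * (1 - r) ≤
      ‖1 - (starRingEnd ℂ) w * a‖ * ‖1 - (starRingEnd ℂ) w * b‖ :=
    mul_le_mul hd1 hd2 (le_of_lt hrpos) (le_trans (le_of_lt hrpos) hd1)
  have hkey : (1 + r) / (1 - r) * m * ((1 - r) * (1 - r)) = m * (1 - r ^ 2) := by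
    field_simp
    ring
  calc m * (1 - r ^ 2) = (1 + r) / (1 - r) * m * ((1 - r) * (1 - r)) := hkey.symm
    _ ≤ _ := mul_le_mul_of_nonneg_left h12 (mul_nonneg hC0 hm)

/-- For continuous `φ, ψ : S¹ → S¹` and every `w ∈ 𝔻`,
`|ξ_φ(w) − ξ_ψ(w)| ≤ ((1 + |w|)/(1 − |w|))·‖φ − ψ‖_{S¹}`. -/
theorem stmt_9 (φ ψ : ℂ → ℂ)
    (hcontφ : ContinuousOn φ {z : ℂ | ‖z‖ = 1})
    (hcontψ : ContinuousOn ψ {z : ℂ | ‖z‖ = 1})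
    (hmapsφ : ∀ ζ : ℂ, ‖ζ‖ = 1 → ‖φ ζ‖ = 1)
    (hmapsψ : ∀ ζ : ℂ, ‖ζ‖ = 1 → ‖ψ ζ‖ = 1) :
    ∀ w : ℂ, ‖w‖ < 1 →
      ‖avgMap φ w - avgMap ψ w‖ ≤
        ((1 + ‖w‖) / (1 - ‖w‖)) * supDistS1 φ ψ := by
  intro w hw
  set C : ℝ := (1 + ‖w‖) / (1 - ‖w‖) with hCdef
  have hC0 : 0 ≤ C := by
    apply div_nonneg <;> [positivity; linarith]
  set e : ℝ → ℂ := fun x => Complex.exp (Complex.I * (x : ℂ)) with he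
  have hecont : Continuous e := by
    exact Complex.continuous_exp.comp (continuous_const.mul Complex.continuous_ofReal)
  have heabs : ∀ x : ℝ, ‖e x‖ = 1 := by
    intro x
    rw [he]; simp [Complex.norm_exp]
  -- continuity of composed maps
  have hφc : Continuous fun x => φ (e x) :=
    hcontφ.comp_continuous hecont (fun x => heabs x)
  have hψc : Continuous fun x => ψ (e x) :=
    hcontψ.comp_continuous hecont (fun x => heabs x)
  have hden : ∀ u : ℂ, ‖u‖ = 1 → (1 : ℂ) - (starRingEnd ℂ) w * u ≠ 0 := by
    intro u hu h
    have h1 : (1 : ℂ) = (starRingEnd ℂ) w * u := by linear_combination h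
    have := congrArg norm h1
    simp [norm_mul, hu] at this
    simp [this] at hw
  set f : ℝ → ℂ := fun x => (φ (e x) - w) / (1 - (starRingEnd ℂ) w * φ (e x)) with hf
  set g : ℝ → ℂ := fun x => (ψ (e x) - w) / (1 - (starRingEnd ℂ) w * ψ (e x)) with hg
  have hfc : Continuous f :=
    (hφc.sub continuous_const).div (continuous_const.sub (continuous_const.mul hφc))
      (fun x => hden _ (hmapsφ _ (heabs x)))
  have hgc : Continuous g :=
    (hψc.sub continuous_const).div (continuous_const.sub (continuous_const.mul hψc))
      (fun x => hden _ (hmapsψ _ (heabs x)))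
  -- sup distance bounds
  have hbdd : BddAbove (Set.range fun ζ : {z : ℂ // ‖z‖ = 1} =>
      dS1 (φ ζ.val) (ψ ζ.val)) := by
    refine ⟨2 * Real.pi, ?_⟩
    rintro d ⟨ζ, rfl⟩
    exact dS1_le_two_pi (hmapsφ _ ζ.prop) (hmapsψ _ ζ.prop)
  have hsup : ∀ x : ℝ, dS1 (φ (e x)) (ψ (e x)) ≤ supDistS1 φ ψ := by
    intro x
    exact le_ciSup hbdd (⟨e x, heabs x⟩ : {z : ℂ // ‖z‖ = 1})
  -- pointwise bound
  have hpt : ∀ x : ℝ, ‖f x - g x‖ ≤ C * supDistS1 φ ψ := by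
    intro x
    have h1 : ‖f x - g x‖ ≤ C * ‖φ (e x) - ψ (e x)‖ :=
      ptwise hw (hmapsφ _ (heabs x)) (hmapsψ _ (heabs x))
    have h2 : ‖φ (e x) - ψ (e x)‖ ≤ dS1 (φ (e x)) (ψ (e x)) :=
      abs_le_dS1 (hmapsφ _ (heabs x)) (hmapsψ _ (heabs x))
    calc ‖f x - g x‖ = ‖f x - g x‖ := rfl
      _ ≤ C * ‖φ (e x) - ψ (e x)‖ := h1
      _ ≤ C * supDistS1 φ ψ := by
          exact mul_le_mul_of_nonneg_left (le_trans h2 (hsup x)) hC0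
  -- integrals
  have hfi : IntervalIntegrable f MeasureTheory.volume 0 (2 * Real.pi) :=
    hfc.intervalIntegrable _ _
  have hgi : IntervalIntegrable g MeasureTheory.volume 0 (2 * Real.pi) :=
    hgc.intervalIntegrable _ _
  have hsub : avgMap φ w - avgMap ψ w
      = (1 / (2 * Real.pi)) • ∫ x in (0 : ℝ)..(2 * Real.pi), (f x - g x) := by
    rw [avgMap, avgMap, ← smul_sub, intervalIntegral.integral_sub hfi hgi]
  have hnormint : ‖∫ x in (0 : ℝ)..(2 * Real.pi), (f x - g x)‖ ≤
      C * supDistS1 φ ψ * |2 * Real.pi - 0| :=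
    intervalIntegral.norm_integral_le_of_norm_le_const (fun x _ => hpt x)
  have hpi : (0 : ℝ) < 2 * Real.pi := by positivity
  rw [hsub]
  have : ‖(1 / (2 * Real.pi)) • ∫ x in (0 : ℝ)..(2 * Real.pi), (f x - g x)‖
      = (1 / (2 * Real.pi)) * ‖∫ x in (0 : ℝ)..(2 * Real.pi), (f x - g x)‖ := by
    rw [norm_smul, Real.norm_eq_abs, abs_of_pos (by positivity)]
  rw [this]
  calc (1 / (2 * Real.pi)) * ‖∫ x in (0 : ℝ)..(2 * Real.pi), (f x - g x)‖
      ≤ (1 / (2 * Real.pi)) * (C * supDistS1 φ ψ * |2 * Real.pi - 0|) := by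
        exact mul_le_mul_of_nonneg_left hnormint (by positivity)
    _ = C * supDistS1 φ ψ := by
        rw [sub_zero, abs_of_pos hpi]
        field_simp
end

section
/- Let z be in the open unit disk 𝔻 and let F : S¹ → ℂ be continuous. Then (1/2π)·∫₀^{2π} F(γ_z^{-1}(e^{ix})) dx = (1/2π)·∫₀^{2π} F(e^{ix})·(1 − |z|²)/|e^{ix} − z|² dx, where γ_z^{-1}(ζ) = (ζ + z)/(1 + z̄·ζ). -/
open Complex Real intervalIntegral

lemma exp_arctan_aux (q : ℂ) (hq : 0 < q.re) :
    Complex.exp ((Real.arctan (q.im / q.re) : ℂ) * Complex.I) = q / ‖q‖ := by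
  have hq0 : q ≠ 0 := by
    intro h; rw [h] at hq; simp at hq
  have habs : (0:ℝ) < ‖q‖ := norm_pos_iff.mpr hq0
  set v : ℝ := q.im / q.re with hv
  have h1 : Real.sqrt (1 + v ^ 2) = ‖q‖ / q.re := by
    have : (1 + v ^ 2) = (‖q‖ / q.re) ^ 2 := by
      rw [hv, div_pow, div_pow, Complex.sq_norm, Complex.normSq_apply]
      field_simp
    rw [this, Real.sqrt_sq (by positivity)]
  rw [Complex.exp_mul_I]
  rw [show Complex.cos (Real.arctan v : ℂ) = ((Real.cos (Real.arctan v) : ℝ) : ℂ) by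
    rw [Complex.ofReal_cos]]
  rw [show Complex.sin (Real.arctan v : ℂ) = ((Real.sin (Real.arctan v) : ℝ) : ℂ) by
    rw [Complex.ofReal_sin]]
  rw [Real.cos_arctan, Real.sin_arctan, h1]
  have hqre : (q.re : ℂ) ≠ 0 := by exact_mod_cast ne_of_gt hq
  have habsC : ((‖q‖ : ℝ) : ℂ) ≠ 0 := by exact_mod_cast ne_of_gt habs
  have hq' : q = (q.re : ℂ) + (q.im : ℂ) * Complex.I := (Complex.re_add_im q).symm
  field_simp [hv]
  conv_rhs => rw [hq']
  push_cast
  rw [hv]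
  field_simp
  push_cast
  field_simp

/-- For `z` in the open unit disk and continuous `F : S¹ → ℂ`,
`(1/2π)·∫₀^{2π} F(γ_z⁻¹(e^{ix})) dx = (1/2π)·∫₀^{2π} F(e^{ix})·(1 − |z|²)/|e^{ix} − z|² dx`,
where `γ_z⁻¹(ζ) = (ζ + z)/(1 + z̄·ζ)`; the Poisson kernel appears as the Jacobian. -/
theorem stmt_16 (z : ℂ) (hz : ‖z‖ < 1) (F : ℂ → ℂ)
    (hcont : ContinuousOn F {w : ℂ | ‖w‖ = 1}) :
    (1 / (2 * Real.pi)) • ∫ x in (0 : ℝ)..(2 * Real.pi),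
        F ((Complex.exp (Complex.I * (x : ℂ)) + z) /
            (1 + (starRingEnd ℂ) z * Complex.exp (Complex.I * (x : ℂ)))) =
      (1 / (2 * Real.pi)) • ∫ x in (0 : ℝ)..(2 * Real.pi),
        F (Complex.exp (Complex.I * (x : ℂ))) *
          (((1 - ‖z‖ ^ 2) /
            ‖Complex.exp (Complex.I * (x : ℂ)) - z‖ ^ 2 : ℝ) : ℂ) := by
  set c : ℂ := (starRingEnd ℂ) z with hc
  set w : ℝ → ℂ := fun t => c * Complex.exp (Complex.I * (t : ℂ)) with hwdef
  set ψ : ℝ → ℝ := fun t => t - 2 * Real.arctan ((w t).im / (1 + (w t).re)) with hψdef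
  set ψ' : ℝ → ℝ := fun t => (1 - ‖z‖ ^ 2) / ‖1 + w t‖ ^ 2 with hψ'def
  set G : ℝ → ℂ := fun x => F (Complex.exp (Complex.I * (x : ℂ))) *
      (((1 - ‖z‖ ^ 2) /
        ‖Complex.exp (Complex.I * (x : ℂ)) - z‖ ^ 2 : ℝ) : ℂ) with hGdef
  have ha : (0:ℝ) < 1 - ‖z‖ ^ 2 := by nlinarith [norm_nonneg z]
  have hwabs : ∀ t : ℝ, ‖w t‖ = ‖z‖ := by
    intro t
    simp [hwdef, hc, Complex.norm_exp]
  have hre : ∀ t : ℝ, 0 < 1 + (w t).re := by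
    intro t
    have h1 : |(w t).re| ≤ ‖w t‖ := Complex.abs_re_le_norm _
    rw [hwabs t] at h1
    have h2 := (abs_le.mp h1).1
    linarith
  have hne : ∀ t : ℝ, (1 + w t) ≠ 0 := by
    intro t h
    have h2 := hre t
    rw [show (1:ℝ) + (w t).re = (1 + w t).re by simp, h] at h2
    simp at h2
  have habsne : ∀ t : ℝ, (0:ℝ) < ‖1 + w t‖ := fun t => norm_pos_iff.mpr (hne t)
  -- exp identity
  have hexp : ∀ t : ℝ, Complex.exp ((ψ t : ℂ) * Complex.I) =
      (Complex.exp (Complex.I * (t : ℂ)) + z) / (1 + w t) := by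
    intro t
    have hq := exp_arctan_aux (1 + w t) (by simpa using hre t)
    have hq' : Complex.exp ((Real.arctan ((w t).im / (1 + (w t).re)) : ℂ) * Complex.I)
        = (1 + w t) / ‖1 + w t‖ := by
      simpa using hq
    have hsplit : ((ψ t : ℝ) : ℂ) * Complex.I =
        (t : ℂ) * Complex.I - ((Real.arctan ((w t).im / (1 + (w t).re)) : ℂ) * Complex.I
          + (Real.arctan ((w t).im / (1 + (w t).re)) : ℂ) * Complex.I) := by
      simp only [hψdef]
      push_cast
      ring
    rw [hsplit, Complex.exp_sub, Complex.exp_add, hq']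
    have hmc : ((‖1 + w t‖ : ℝ) : ℂ) * ((‖1 + w t‖ : ℝ) : ℂ)
        = (1 + w t) * (starRingEnd ℂ) (1 + w t) := by
      rw [Complex.mul_conj]
      push_cast [Complex.normSq_eq_norm_sq]
      ring
    have hconjw : (starRingEnd ℂ) (1 + w t) = 1 + z * Complex.exp (-(Complex.I * (t : ℂ))) := by
      simp [hwdef, hc, ← Complex.exp_conj, map_mul, Complex.conj_I]
    have hee : Complex.exp (Complex.I * (t : ℂ)) * Complex.exp (-(Complex.I * (t : ℂ))) = 1 := by
      rw [← Complex.exp_add]; simp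
    have habsC : ((‖1 + w t‖ : ℝ) : ℂ) ≠ 0 := by
      exact_mod_cast ne_of_gt (habsne t)
    rw [div_eq_div_iff (by simp [div_ne_zero_iff, hne t, habsC] : (1 + w t) / (‖1 + w t‖ : ℂ) * ((1 + w t) / (‖1 + w t‖ : ℂ)) ≠ 0) (hne t)]
    field_simp
    rw [sq (‖1 + w t‖ : ℂ), hmc, hconjw, mul_comm ((t:ℂ)) Complex.I]
    linear_combination (z * (1 + w t)^2) * hee
  -- derivative of ψ
  have hwderiv : ∀ t : ℝ, HasDerivAt w (Complex.I * w t) t := by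
    intro t
    have h0 : HasDerivAt (fun s : ℝ => ((s : ℂ))) 1 t := by
      exact ((hasDerivAt_id t).ofReal_comp).congr_deriv (by simp)
    have h1 : HasDerivAt (fun s : ℝ => Complex.I * (s : ℂ)) Complex.I t := by
      simpa using h0.const_mul Complex.I
    have h2 := h1.cexp
    have h3 := h2.const_mul c
    simp only [hwdef]
    exact h3.congr_deriv (by ring)
  have hderiv : ∀ t : ℝ, HasDerivAt ψ (ψ' t) t := by
    intro t
    have hre' : HasDerivAt (fun s => 1 + (w s).re) (-(w t).im) t := by
      have h := Complex.reCLM.hasFDerivAt.comp_hasDerivAt t (hwderiv t)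
      have h' : HasDerivAt (fun s => (w s).re) (-(w t).im) t := by
        exact h.congr_deriv (by simp [Complex.mul_re])
      exact h'.const_add 1
    have him : HasDerivAt (fun s => (w s).im) ((w t).re) t := by
      have h := Complex.imCLM.hasFDerivAt.comp_hasDerivAt t (hwderiv t)
      exact h.congr_deriv (by simp [Complex.mul_im])
    have hv : HasDerivAt (fun s => (w s).im / (1 + (w s).re))
        (((w t).re * (1 + (w t).re) - (w t).im * (-(w t).im)) / (1 + (w t).re) ^ 2) t :=
      him.div hre' (ne_of_gt (hre t))
    have hat := (Real.hasDerivAt_arctan ((w t).im / (1 + (w t).re))).comp t hv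
    have hfin := (hasDerivAt_id t).sub (hat.const_mul 2)
    have habs2 : ‖1 + w t‖ ^ 2 = (1 + (w t).re) ^ 2 + (w t).im ^ 2 := by
      rw [Complex.sq_norm, Complex.normSq_apply]
      simp
      ring
    have hz2 : ‖z‖ ^ 2 = (w t).re ^ 2 + (w t).im ^ 2 := by
      rw [← hwabs t, Complex.sq_norm, Complex.normSq_apply]
      ring
    refine (hfin.congr_deriv ?_ : HasDerivAt ψ _ t)
    simp only [hψ'def, habs2, hz2, Function.comp]
    have hg := hre t
    have hgg : (0:ℝ) < (1 + (w t).re)^2 + (w t).im^2 := by positivity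
    field_simp
    ring
  -- continuity of ψ'
  have hψ'cont : Continuous ψ' := by
    simp only [hψ'def]
    apply Continuous.div continuous_const
    · have : Continuous fun t : ℝ => (1 + w t) := by
        simp only [hwdef]; fun_prop
      exact (continuous_norm.comp this).pow 2
    · intro t
      exact pow_ne_zero 2 (ne_of_gt (habsne t))
  -- continuity of G
  have hez : ∀ x : ℝ, Complex.exp (Complex.I * (x:ℂ)) - z ≠ 0 := by
    intro x h
    rw [sub_eq_zero] at h
    have h1 : ‖z‖ = 1 := by rw [← h]; simp [Complex.norm_exp]
    rw [h1] at hz; exact lt_irrefl _ hz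
  have hGcont : Continuous G := by
    simp only [hGdef]
    apply Continuous.mul
    · apply hcont.comp_continuous (by fun_prop : Continuous fun x : ℝ => Complex.exp (Complex.I * (x:ℂ)))
      intro x; simp [Complex.norm_exp]
    · apply Complex.continuous_ofReal.comp
      apply Continuous.div continuous_const
      · exact (continuous_norm.comp (by fun_prop)).pow 2
      · intro x
        exact pow_ne_zero 2 (ne_of_gt (norm_pos_iff.mpr (hez x)))
  -- periodicity
  have hGper : Function.Periodic G (2 * Real.pi) := by
    intro x
    simp only [hGdef]
    have hE : Complex.exp (Complex.I * ((x + 2*Real.pi : ℝ) : ℂ)) = Complex.exp (Complex.I * (x:ℂ)) := by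
      push_cast
      rw [mul_add, Complex.exp_add,
        show Complex.I * (2*(Real.pi:ℂ)) = 2*Real.pi*Complex.I by ring,
        Complex.exp_two_pi_mul_I, mul_one]
    rw [hE]
  have hψend : ψ (2*Real.pi) = ψ 0 + 2*Real.pi := by
    have hw2 : w (2*Real.pi) = w 0 := by
      simp only [hwdef]
      congr 1
      push_cast
      rw [show Complex.I * (2*(Real.pi:ℂ)) = 2*Real.pi*Complex.I by ring,
        Complex.exp_two_pi_mul_I]
      simp
    simp only [hψdef, hw2]; ring
  -- pointwise integrand identity
  have hint : ∀ x : ℝ, ψ' x • G (ψ x)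
      = F ((Complex.exp (Complex.I * (x:ℂ)) + z) / (1 + c * Complex.exp (Complex.I * (x:ℂ)))) := by
    intro x
    have hb := habsne x
    have hzc : z * c = ((‖z‖ : ℝ) : ℂ)^2 := by
      rw [hc, Complex.mul_conj]; push_cast [Complex.normSq_eq_norm_sq]; ring
    have hnum : (Complex.exp (Complex.I * (x:ℂ)) + z)/(1 + w x) - z
        = Complex.exp (Complex.I * (x:ℂ)) * ((1 - ‖z‖^2 : ℝ):ℂ) / (1 + w x) := by
      field_simp [hne x]
      simp only [hwdef]
      push_cast
      linear_combination (- Complex.exp (Complex.I * (x:ℂ))) * hzc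
    have habsu : ‖(Complex.exp (Complex.I * (x:ℂ)) + z)/(1 + w x) - z‖
        = (1 - ‖z‖^2)/‖1 + w x‖ := by
      rw [hnum, norm_div, norm_mul, Complex.norm_exp, Complex.norm_real, Real.norm_eq_abs, abs_of_pos ha]
      simp [Complex.mul_re]
    have hψeq : Complex.exp (Complex.I * ((ψ x : ℝ) : ℂ))
        = (Complex.exp (Complex.I * (x:ℂ)) + z) / (1 + w x) := by
      rw [mul_comm]; exact hexp x
    simp only [hGdef]
    rw [hψeq, habsu]
    have hP : (ψ' x * ((1 - ‖z‖^2)/((1 - ‖z‖^2)/‖1+w x‖)^2) : ℝ) = 1 := by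
      simp only [hψ'def]
      field_simp
    have : (1 + c * Complex.exp (Complex.I * (x:ℂ))) = 1 + w x := rfl
    rw [this, Complex.real_smul]
    calc (↑(ψ' x) : ℂ) * ((F ((Complex.exp (Complex.I * (x:ℂ)) + z) / (1 + w x))) *
          ((((1 - ‖z‖^2)/((1 - ‖z‖^2)/‖1+w x‖)^2 : ℝ)) : ℂ))
        = F ((Complex.exp (Complex.I * (x:ℂ)) + z) / (1 + w x)) *
          ((ψ' x * ((1 - ‖z‖^2)/((1 - ‖z‖^2)/‖1+w x‖)^2) : ℝ) : ℂ) := by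
          push_cast; ring
      _ = F ((Complex.exp (Complex.I * (x:ℂ)) + z) / (1 + w x)) := by rw [hP]; simp
  -- change of variables
  have hchange := intervalIntegral.integral_comp_smul_deriv (a := (0:ℝ)) (b := 2*Real.pi)
    (f := ψ) (f' := ψ') (g := G) (fun x _ => hderiv x) hψ'cont.continuousOn hGcont
  have hL : (∫ x in (0:ℝ)..(2*Real.pi),
      F ((Complex.exp (Complex.I * (x:ℂ)) + z) / (1 + c * Complex.exp (Complex.I * (x:ℂ)))))
      = ∫ x in (0:ℝ)..(2*Real.pi), ψ' x • (G ∘ ψ) x :=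
    intervalIntegral.integral_congr (fun x _ => (hint x).symm)
  rw [hL, hchange, hψend, hGper.intervalIntegral_add_eq (ψ 0) 0, zero_add]
end

section
/- Let g be a Möbius transformation of the unit disk, g(z) = e^{iθ}·(z − a)/(1 − ā·z) with θ ∈ ℝ, a ∈ 𝔻. Let φ : S¹ → S¹ be continuous and let w₀ ∈ 𝔻 satisfy ξ_φ(w₀) = 0. Then ξ_{g∘φ}(g(w₀)) = 0; that is, the barycenter of a circle map is conformally natural under post-composition by Möbius transformations of the disk. -/
lemma one_sub_ne (u : ℂ) (h : ‖u‖ < 1) : (1 : ℂ) - u ≠ 0 := by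
  intro h'
  have : u = 1 := by linear_combination -h'
  rw [this] at h; simp at h

lemma key (E a w z : ℂ) (hE : (starRingEnd ℂ) E * E = 1)
    (ha : ‖a‖ < 1) (hw : ‖w‖ < 1) (hz : ‖z‖ = 1) :
    (E * (z - a) / (1 - (starRingEnd ℂ) a * z) - E * (w - a) / (1 - (starRingEnd ℂ) a * w)) /
      (1 - (starRingEnd ℂ) (E * (w - a) / (1 - (starRingEnd ℂ) a * w)) *
        (E * (z - a) / (1 - (starRingEnd ℂ) a * z)))
    = (E * (1 - a * (starRingEnd ℂ) w) / (1 - (starRingEnd ℂ) a * w)) *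
        ((z - w) / (1 - (starRingEnd ℂ) w * z)) := by
  have d1 : (1 : ℂ) - (starRingEnd ℂ) a * z ≠ 0 := by
    apply one_sub_ne; rw [norm_mul, Complex.norm_conj, hz, mul_one]; exact ha
  have d2 : (1 : ℂ) - (starRingEnd ℂ) a * w ≠ 0 := by
    apply one_sub_ne; rw [norm_mul, Complex.norm_conj]
    calc ‖a‖ * ‖w‖ ≤ 1 * ‖w‖ := by
          apply mul_le_mul_of_nonneg_right ha.le (norm_nonneg w)
      _ < 1 := by rw [one_mul]; exact hw
  have d3 : (1 : ℂ) - (starRingEnd ℂ) w * z ≠ 0 := by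
    apply one_sub_ne; rw [norm_mul, Complex.norm_conj, hz, mul_one]; exact hw
  have d4 : (1 : ℂ) - a * (starRingEnd ℂ) w ≠ 0 := by
    apply one_sub_ne; rw [norm_mul, Complex.norm_conj]
    calc ‖a‖ * ‖w‖ ≤ 1 * ‖w‖ := by
          apply mul_le_mul_of_nonneg_right ha.le (norm_nonneg w)
      _ < 1 := by rw [one_mul]; exact hw
  have d6 : (1 : ℂ) - a * (starRingEnd ℂ) a ≠ 0 := by
    apply one_sub_ne; rw [norm_mul, Complex.norm_conj]
    calc ‖a‖ * ‖a‖ ≤ 1 * ‖a‖ := by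
          apply mul_le_mul_of_nonneg_right ha.le (norm_nonneg a)
      _ < 1 := by rw [one_mul]; exact ha
  have hD : 1 - (starRingEnd ℂ) (E * (w - a) / (1 - (starRingEnd ℂ) a * w)) *
        (E * (z - a) / (1 - (starRingEnd ℂ) a * z))
      = (1 - a * (starRingEnd ℂ) a) * (1 - (starRingEnd ℂ) w * z) /
        ((1 - a * (starRingEnd ℂ) w) * (1 - (starRingEnd ℂ) a * z)) := by
    rw [map_div₀, map_mul, map_sub, map_sub, map_one, map_mul]
    rw [Complex.conj_conj]
    have d4' : (1 : ℂ) - (starRingEnd ℂ) w * a ≠ 0 := by rwa [mul_comm]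
    field_simp
    ring_nf
    linear_combination (-(z*(starRingEnd ℂ) w) + ((starRingEnd ℂ) w)*a + ((starRingEnd ℂ) a)*z - ((starRingEnd ℂ) a)*a) * hE
  rw [hD]
  have d5 : (1 - a * (starRingEnd ℂ) a) * (1 - (starRingEnd ℂ) w * z) /
      ((1 - a * (starRingEnd ℂ) w) * (1 - (starRingEnd ℂ) a * z)) ≠ 0 := by
    apply div_ne_zero (mul_ne_zero d6 d3) (mul_ne_zero d4 d1)
  have d1' : (1 : ℂ) - z * (starRingEnd ℂ) a ≠ 0 := by rwa [mul_comm]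
  have d3' : (1 : ℂ) - z * (starRingEnd ℂ) w ≠ 0 := by rwa [mul_comm]
  field_simp
  ring

/-- Let `g(z) = e^{iθ}·(z − a)/(1 − ā·z)` be a Möbius transformation
of the unit disk (`θ ∈ ℝ`, `a ∈ 𝔻`).  If `φ : S¹ → S¹` is continuous and
`w₀ ∈ 𝔻` is a barycenter of `φ` (`ξ_φ(w₀) = 0`), then `g(w₀)` is a barycenter
of `g ∘ φ`: `ξ_{g∘φ}(g(w₀)) = 0`.  This is the conformal naturality of the
barycenter under post-composition. -/
theorem stmt_17 (θ : ℝ) (a : ℂ) (ha : ‖a‖ < 1) (φ : ℂ → ℂ)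
    (hcont : ContinuousOn φ {z : ℂ | ‖z‖ = 1})
    (hmaps : ∀ ζ : ℂ, ‖ζ‖ = 1 → ‖φ ζ‖ = 1)
    (w₀ : ℂ) (hw₀ : ‖w₀‖ < 1) (hbar : avgMap φ w₀ = 0) :
    avgMap
      (fun ζ => Complex.exp (Complex.I * (θ : ℂ)) * (φ ζ - a) /
        (1 - (starRingEnd ℂ) a * φ ζ))
      (Complex.exp (Complex.I * (θ : ℂ)) * (w₀ - a) /
        (1 - (starRingEnd ℂ) a * w₀)) = 0 := by
  set E := Complex.exp (Complex.I * (θ : ℂ)) with hEdef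
  have hE : (starRingEnd ℂ) E * E = 1 := by
    rw [hEdef, ← Complex.exp_conj, ← Complex.exp_add]
    simp [Complex.exp_eq_one_iff]
  have hint : (∫ x in (0 : ℝ)..(2 * Real.pi),
      (φ (Complex.exp (Complex.I * (x : ℂ))) - w₀) /
        (1 - (starRingEnd ℂ) w₀ * φ (Complex.exp (Complex.I * (x : ℂ))))) = 0 := by
    have := hbar
    rw [avgMap] at this
    have h2π : (1 / (2 * Real.pi) : ℝ) ≠ 0 := by positivity
    exact (smul_eq_zero.mp this).resolve_left h2π
  rw [avgMap]
  have hcong : ∀ x : ℝ,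
      ((fun ζ => E * (φ ζ - a) / (1 - (starRingEnd ℂ) a * φ ζ))
          (Complex.exp (Complex.I * (x : ℂ))) -
        E * (w₀ - a) / (1 - (starRingEnd ℂ) a * w₀)) /
        (1 - (starRingEnd ℂ) (E * (w₀ - a) / (1 - (starRingEnd ℂ) a * w₀)) *
          (fun ζ => E * (φ ζ - a) / (1 - (starRingEnd ℂ) a * φ ζ))
            (Complex.exp (Complex.I * (x : ℂ))))
      = (E * (1 - a * (starRingEnd ℂ) w₀) / (1 - (starRingEnd ℂ) a * w₀)) *
        ((φ (Complex.exp (Complex.I * (x : ℂ))) - w₀) /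
          (1 - (starRingEnd ℂ) w₀ * φ (Complex.exp (Complex.I * (x : ℂ))))) := by
    intro x
    simp only
    refine key E a w₀ (φ (Complex.exp (Complex.I * (x : ℂ)))) hE ha hw₀ ?_
    apply hmaps
    rw [mul_comm]
    exact Complex.norm_exp_ofReal_mul_I x
  simp only [hcong]
  rw [intervalIntegral.integral_const_mul, hint, mul_zero, smul_zero]
end

section
/- Let α ∈ (0,1), C ≥ 0, and let ψ : S¹ → S¹ satisfy |ψ(ζ) − ζ| ≤ C·|ζ − 1|^{α+1} for every ζ ∈ S¹. Then for every t ∈ [0,1) and every ζ ∈ S¹, setting ω = h_t(ζ), one has |h_t^{-1}(ψ(ω)) − ζ| ≤ 4C·|ω − 1|^α. -/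
/-- Let `α ∈ (0,1)`, `C ≥ 0`, and let `ψ : S¹ → S¹` satisfy
`|ψ(ζ) − ζ| ≤ C·|ζ − 1|^(α+1)` on `S¹`.  Then for every `t ∈ [0,1)` and every
`ζ ∈ S¹`, setting `ω = h_t(ζ)`, one has `|h_t⁻¹(ψ(ω)) − ζ| ≤ 4C·|ω − 1|^α`. -/
theorem stmt_18 (α C : ℝ) (hα : 0 < α) (hα1 : α < 1) (hC : 0 ≤ C)
    (ψ : ℂ → ℂ) (hmaps : ∀ ζ : ℂ, ‖ζ‖ = 1 → ‖ψ ζ‖ = 1)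
    (hψ : ∀ ζ : ℂ, ‖ζ‖ = 1 →
      ‖ψ ζ - ζ‖ ≤ C * (‖ζ - 1‖) ^ (α + 1)) :
    ∀ t : ℝ, 0 ≤ t → t < 1 → ∀ ζ : ℂ, ‖ζ‖ = 1 →
      ‖mobH (-t) (ψ (mobH t ζ)) - ζ‖ ≤
        4 * C * (‖mobH t ζ - 1‖) ^ α := by
  intro t ht0 ht1 ζ hζ
  have habs_tz : ∀ z : ℂ, ‖z‖ = 1 → ‖(t:ℂ)*z‖ = t := by
    intro z hz
    rw [norm_mul, hz, Complex.norm_real, Real.norm_eq_abs, abs_of_nonneg ht0, mul_one]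
  have hne1 : ∀ z : ℂ, ‖z‖ = 1 → (1 : ℂ) - (t:ℂ)*z ≠ 0 := by
    intro z hz h
    have h1 : (t:ℂ)*z = 1 := by linear_combination -h
    have := habs_tz z hz
    rw [h1] at this; simp at this; linarith
  have hne2 : (1 : ℂ) + (t:ℂ)*ζ ≠ 0 := by
    intro h
    have h1 : (t:ℂ)*ζ = -1 := by linear_combination h
    have := habs_tz ζ hζ
    rw [h1] at this; simp at this; linarith
  have hlb : ∀ z : ℂ, ‖z‖ = 1 → 1 - t ≤ ‖1 - (t:ℂ)*z‖ := by
    intro z hz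
    have := norm_sub_norm_le (1 : ℂ) ((t:ℂ)*z)
    simp only [habs_tz z hz, norm_one] at this
    linarith
  set w := mobH t ζ with hw
  -- |w| = 1
  have hwabs : ‖w‖ = 1 := by
    have key : ζ + (t:ℂ) = ζ * (1 + (t:ℂ) * ((starRingEnd ℂ) ζ)) := by
      have : ζ * ((starRingEnd ℂ) ζ) = 1 := by
        rw [Complex.mul_conj]
        norm_cast
        rw [← Complex.sq_norm, hζ]; norm_num
      linear_combination (-(t:ℂ)) * this
    have habs_conj : ‖1 + (t:ℂ) * ((starRingEnd ℂ) ζ)‖ = ‖1 + (t:ℂ)*ζ‖ := by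
      have : (1 : ℂ) + (t:ℂ) * ((starRingEnd ℂ) ζ) = (starRingEnd ℂ) (1 + (t:ℂ)*ζ) := by
        simp [map_add, map_mul]
      rw [this, Complex.norm_conj]
    rw [hw, mobH, norm_div, key, norm_mul, hζ, one_mul, habs_conj,
      div_self (norm_ne_zero_iff.mpr hne2)]
  have hψw : ‖ψ w‖ = 1 := hmaps w hwabs
  have hne_w : (1 : ℂ) - (t:ℂ)*w ≠ 0 := hne1 w hwabs
  have hne_ψ : (1 : ℂ) - (t:ℂ)*(ψ w) ≠ 0 := hne1 (ψ w) hψw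
  -- ζ = (w - t)/(1 - t w)
  have hζeq : ζ = (w - (t:ℂ)) / (1 - (t:ℂ)*w) := by
    rw [eq_div_iff hne_w, hw, mobH, div_eq_mul_inv]
    linear_combination (-(ζ + (t:ℂ))) * mul_inv_cancel₀ hne2
  -- key identity
  have hkey : mobH (-t) (ψ w) - ζ =
      (ψ w - w) * (1 - (t:ℂ)^2) / ((1 - (t:ℂ)*(ψ w)) * (1 - (t:ℂ)*w)) := by
    have e1 : mobH (-t) (ψ w) = (ψ w - (t:ℂ)) / (1 - (t:ℂ) * ψ w) := by
      rw [mobH]; push_cast; ring_nf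
    rw [e1, hζeq, div_sub_div _ _ hne_ψ hne_w]
    congr 1
    ring
  rw [hkey, norm_div, norm_mul, norm_mul]
  have habs_t2 : ‖1 - (t:ℂ)^2‖ = 1 - t^2 := by
    have : (1 : ℂ) - (t:ℂ)^2 = ((1 - t^2 : ℝ) : ℂ) := by push_cast; ring
    rw [this, Complex.norm_real, Real.norm_eq_abs, abs_of_nonneg (by nlinarith)]
  rw [habs_t2]
  set X := ‖w - 1‖ with hX
  set A := ‖ψ w - w‖ with hA
  set B1 := ‖1 - (t:ℂ)*(ψ w)‖ with hB1
  set B2 := ‖1 - (t:ℂ)*w‖ with hB2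
  have hX0 : 0 ≤ X := norm_nonneg _
  have hXα : 0 ≤ C * X ^ α := mul_nonneg hC (Real.rpow_nonneg hX0 _)
  have hB2pos : 0 < B2 := norm_pos_iff.mpr hne_w
  have hB1ge : 1 - t ≤ B1 := hlb (ψ w) hψw
  have hXle : X ≤ 2 * B2 := by
    have h1 : X ≤ ‖w - (t:ℂ)*w‖ + ‖(t:ℂ)*w - 1‖ := by
      have := norm_sub_le_norm_sub_add_norm_sub (w) ((t:ℂ)*w) (1)
      simpa [hX] using this
    have h2 : ‖w - (t:ℂ)*w‖ = 1 - t := by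
      have : w - (t:ℂ)*w = (((1 - t : ℝ)) : ℂ) * w := by push_cast; ring
      rw [this, norm_mul, Complex.norm_real, Real.norm_eq_abs, hwabs, mul_one, abs_of_nonneg (by linarith)]
    have h3 : ‖(t:ℂ)*w - 1‖ = B2 := by
      rw [hB2, ← norm_neg]; ring_nf
    have h4 : 1 - t ≤ B2 := hlb w hwabs
    rw [h2, h3] at h1; linarith
  have hAle : A ≤ C * X ^ (α + 1) := hψ w hwabs
  have hXpow : X ^ (α + 1) = X ^ α * X := by
    rw [Real.rpow_add' hX0 (by linarith), Real.rpow_one]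
  -- main estimate
  have main : A * (1 - t^2) / (B1 * B2) ≤
      (C * X ^ α * (2 * B2) * (1 - t^2)) / ((1 - t) * B2) := by
    apply div_le_div₀
    · exact mul_nonneg (by positivity) (by nlinarith)
    · apply mul_le_mul_of_nonneg_right _ (by nlinarith)
      calc A ≤ C * X ^ (α + 1) := hAle
        _ = C * X ^ α * X := by rw [hXpow]; ring
        _ ≤ C * X ^ α * (2 * B2) := mul_le_mul_of_nonneg_left hXle hXα
    · exact mul_pos (by linarith) hB2pos
    · apply mul_le_mul_of_nonneg_right _ (le_of_lt hB2pos)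
      linarith
  have heq : (C * X ^ α * (2 * B2) * (1 - t^2)) / ((1 - t) * B2) =
      2 * (C * X ^ α) * (1 + t) := by
    have h1t : (1 : ℝ) - t ≠ 0 := by linarith
    field_simp
    ring
  have hfin : 2 * (C * X ^ α) * (1 + t) ≤ 4 * C * X ^ α := by nlinarith
  calc A * (1 - t^2) / (B1 * B2)
      ≤ (C * X ^ α * (2 * B2) * (1 - t^2)) / ((1 - t) * B2) := main
    _ = 2 * (C * X ^ α) * (1 + t) := heq
    _ ≤ 4 * C * X ^ α := hfin
end
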